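/- For a nonempty finite set 𝒥 of jobs with sizes in (0, g(m)]: (1/2)·∑_{J ∈ 𝒥} r̃(𝒥)(J) ≤ ∑_{z ∈ T(z⋄(𝒥))} cn^𝒥_{z⋄(𝒥)}(z)·r(z) ≤ (15/7)·∑_{J ∈ 𝒥} r̃(𝒥)(J). -/

import Mathlib

open scoped Classical
open Finset MeasureTheory

namespace BSHM

noncomputable section

/-- The set of candidate parents of machine type `i`: types `j ∈ M` with `j > i`
and a strictly smaller normalized cost rate per capacity unit. -/
def pset (m : ℕ) (g r : ℕ → ℝ) (i : ℕ) : Set ℕ :=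
  {j | j ≤ m ∧ i < j ∧ r j / g j < r i / g i}

/-- The parent `p i` of machine type `i` (equal to `0` when the parent is undefined,
since any actual parent has index `≥ 2`). -/
def p (m : ℕ) (g r : ℕ → ℝ) (i : ℕ) : ℕ := sInf (pset m g r i)

/-- `pdef i` asserts that the parent of `i` is defined. -/
def pdef (m : ℕ) (g r : ℕ → ℝ) (i : ℕ) : Prop := (pset m g r i).Nonempty

/-- One step of the parent relation: `b` is the (defined) parent of `a`. -/
def pstep (m : ℕ) (g r : ℕ → ℝ) (a b : ℕ) : Prop :=
  pdef m g r a ∧ b = p m g r a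

/-- `P i`: the set consisting of `i` together with all of its iterated parents. -/
def P (m : ℕ) (g r : ℕ → ℝ) (i : ℕ) : Set ℕ :=
  {z | Relation.ReflTransGen (pstep m g r) i z}

/-- `A i`: the set of nodes in the tree rooted at `i`,
i.e. all `z ∈ M` having `i` as an ancestor (or equal to `i`). -/
def A (m : ℕ) (g r : ℕ → ℝ) (i : ℕ) : Set ℕ :=
  {z | 1 ≤ z ∧ z ≤ m ∧ i ∈ P m g r z}

/-- `v i`: the lowest-indexed node in the tree rooted at `i`. -/
def v (m : ℕ) (g r : ℕ → ℝ) (i : ℕ) : ℕ := sInf (A m g r i)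

/-- `y i`: the younger siblings of `i` (same parent status, smaller index). -/
def y (m : ℕ) (g r : ℕ → ℝ) (i : ℕ) : Set ℕ :=
  {z | 1 ≤ z ∧ z ≤ m ∧ z < i ∧ p m g r z = p m g r i}

/-- `esib i`: the elder siblings of `i`. -/
def esib (m : ℕ) (g r : ℕ → ℝ) (i : ℕ) : Set ℕ :=
  {z | 1 ≤ z ∧ z ≤ m ∧ i < z ∧ p m g r z = p m g r i}

/-- `T k := {k} ∪ ⋃_{z ∈ P(k)} y(z)`. -/
def T (m : ℕ) (g r : ℕ → ℝ) (k : ℕ) : Set ℕ :=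
  {k} ∪ ⋃ z ∈ P m g r k, y m g r z

/-- `T k` as a `Finset` (all relevant nodes lie in `{k} ∪ [1, m]`). -/
def TIcc (m : ℕ) (g r : ℕ → ℝ) (k : ℕ) : Finset ℕ :=
  (insert k (Finset.Icc 1 m)).filter (fun z => z ∈ T m g r k)

/-! ### Jobs and one-shot scheduling -/

variable {ι : Type*}

/-- The exact machine type of a job `J`: the least `z ∈ M` with `s J ≤ g z`. -/
def mty (m : ℕ) (g : ℕ → ℝ) (s : ι → ℝ) (J : ι) : ℕ :=
  sInf {z | 1 ≤ z ∧ z ≤ m ∧ s J ≤ g z}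

/-- Total size of a finite set of jobs. -/
def Ssum (s : ι → ℝ) (W : Finset ι) : ℝ := ∑ J ∈ W, s J

/-- `k0f X`: the highest-indexed exact machine type among the jobs of `X`. -/
def k0f (m : ℕ) (g : ℕ → ℝ) (s : ι → ℝ) (X : Finset ι) : ℕ :=
  X.sup (fun J => mty m g s J)

/-- `H z X`: the jobs of `X` whose exact machine type lies in the tree rooted at `z`. -/
def H (m : ℕ) (g r : ℕ → ℝ) (s : ι → ℝ) (z : ℕ) (X : Finset ι) : Finset ι :=
  X.filter (fun J => mty m g s J ∈ A m g r z)

/-- `SH X z := S(H_z(X))`. -/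
def SH (m : ℕ) (g r : ℕ → ℝ) (s : ι → ℝ) (X : Finset ι) (z : ℕ) : ℝ :=
  Ssum s (H m g r s z X)

/-- Feasibility of a machine configuration `w : M → ℕ` for the job set `X`. -/
def Feasible (m : ℕ) (g : ℕ → ℝ) (s : ι → ℝ) (X : Finset ι) (w : ℕ → ℕ) : Prop :=
  ∀ i, 1 ≤ i → i ≤ m →
    Ssum s (X.filter (fun J => i ≤ mty m g s J)) ≤ ∑ z ∈ Finset.Icc i m, (w z : ℝ) * g z

/-- The cost of a machine configuration. -/
def cost (m : ℕ) (r : ℕ → ℝ) (w : ℕ → ℕ) : ℝ :=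
  ∑ z ∈ Finset.Icc 1 m, (w z : ℝ) * r z

/-- The optimal one-shot scheduling cost for a job set `X`. -/
def OPT1 (m : ℕ) (g r : ℕ → ℝ) (s : ι → ℝ) (X : Finset ι) : ℝ :=
  sInf {c : ℝ | ∃ w : ℕ → ℕ, Feasible m g s X w ∧ c = cost m r w}

/-- The fractional machine configuration `cn_{z*}` for the job set `X`, with
highest-indexed machine type `zs`.  A node `i ∈ T(zs) \ {zs}` is the boundary
type `i*` exactly when `∑_{z ∈ T(zs), z > i} S(H_z) ≤ cn(zs)·g(zs) <
∑_{z ∈ T(zs), z ≥ i} S(H_z)`; nodes above the boundary get `0`,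
nodes below it get `S(H_i)/g_i`. -/
def cn (m : ℕ) (g r : ℕ → ℝ) (s : ι → ℝ) (X : Finset ι) (zs i : ℕ) : ℝ :=
  let B : ℝ := (⌈SH m g r s X zs / g zs⌉₊ : ℝ) * g zs
  let Sge : ℝ := ∑ z ∈ (TIcc m g r zs).filter (fun z => i ≤ z), SH m g r s X z
  let Sgt : ℝ := ∑ z ∈ (TIcc m g r zs).filter (fun z => i < z), SH m g r s X z
  if i = zs then (⌈SH m g r s X zs / g zs⌉₊ : ℝ)
  else if i ∈ T m g r zs then
    (if Sgt ≤ B ∧ B < Sge then (Sge - B) / g i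
     else if B < Sgt then SH m g r s X i / g i
     else 0)
  else 0

/-- `cn_{zs}` is decent: for every strict ancestor `zt` of `zs`, the total cost of
the machines of types in `T(zs) ∩ A(zt)` is at most the cost of one type-`zt` machine. -/
def decent (m : ℕ) (g r : ℕ → ℝ) (s : ι → ℝ) (X : Finset ι) (zs : ℕ) : Prop :=
  ∀ zt ∈ P m g r zs, zt ≠ zs →
    (∑ z ∈ (TIcc m g r zs).filter (fun z => z ∈ A m g r zt), cn m g r s X zs z * r z) ≤ r zt

/-- `z⋄(X)`: the least `z* ∈ P(k0(X))` such that `cn_{z*}` is decent. -/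
def zdia (m : ℕ) (g r : ℕ → ℝ) (s : ι → ℝ) (X : Finset ι) : ℕ :=
  sInf {zs | zs ∈ P m g r (k0f m g s X) ∧ decent m g r s X zs}

/-- The child of `zd` whose subtree contains node `k`. -/
def chil (m : ℕ) (g r : ℕ → ℝ) (zd k : ℕ) : ℕ :=
  sInf {i | p m g r i = zd ∧ k ∈ A m g r i}

/-- The node `i ∈ T(zd)` whose subtree contains node `k`. -/
def idxT (m : ℕ) (g r : ℕ → ℝ) (zd k : ℕ) : ℕ :=
  sInf {i | i ∈ T m g r zd ∧ k ∈ A m g r i}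

/-- The children `f(zd)` of node `zd`, as a `Finset`. -/
def fchFin (m : ℕ) (g r : ℕ → ℝ) (zd : ℕ) : Finset ℕ :=
  (Finset.Icc 1 m).filter (fun z => p m g r z = zd)

/-- The cost `r̃(X)(J)` charged to the job `J` of the job set `X`. -/
def charge (m : ℕ) (g r : ℕ → ℝ) (s : ι → ℝ) (X : Finset ι) (J : ι) : ℝ :=
  let zd := zdia m g r s X
  let ρ : ℕ → ℝ := fun i => r i / g i
  let Hh := X.filter (fun J' => mty m g s J' = zd)
  let c : ℝ := Ssum s Hh * ρ zd + ∑ i ∈ fchFin m g r zd, SH m g r s X i * ρ i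
  if mty m g s J ∈ A m g r zd then
    if g zd ≤ SH m g r s X zd then s J * ρ zd
    else if r zd < c then
      if mty m g s J = zd then s J * ρ zd
      else
        s J * (ρ (chil m g r zd (mty m g s J)) -
          (ρ (chil m g r zd (mty m g s J)) - ρ zd) *
            ((c - r zd) /
              (∑ i ∈ fchFin m g r zd, ∑ J' ∈ H m g r s i X, s J' * (ρ i - ρ zd))))
    else
      if mty m g s J = zd then s J * ρ zd * (1 + (r zd - c) / (Ssum s Hh * ρ zd))
      else s J * ρ (chil m g r zd (mty m g s J))
  else s J * ρ (idxT m g r zd (mty m g s J))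

end

end BSHM

namespace BSHM


/-- Bundle of the standing hypotheses on machine types. -/
structure OK (m : ℕ) (g r : ℕ → ℝ) : Prop where
  hm : 1 ≤ m
  hg1 : 0 < g 1
  hr1 : 0 < r 1
  hg : ∀ i j, 1 ≤ i → i < j → j ≤ m → g i < g j
  hr : ∀ i j, 1 ≤ i → i < j → j ≤ m → r i < r j
  hr8 : ∀ z, 1 ≤ z → z ≤ m → ∃ n : ℤ, r z = (8 : ℝ) ^ n

namespace OK

variable {m : ℕ} {g r : ℕ → ℝ} (h : OK m g r)
include h

lemma gpos {i : ℕ} (h1 : 1 ≤ i) (h2 : i ≤ m) : 0 < g i := by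
  rcases eq_or_lt_of_le h1 with h1' | h1'
  · rw [← h1']; exact h.hg1
  · exact lt_trans h.hg1 (h.hg 1 i le_rfl h1' h2)

lemma rpos {i : ℕ} (h1 : 1 ≤ i) (h2 : i ≤ m) : 0 < r i := by
  rcases eq_or_lt_of_le h1 with h1' | h1'
  · rw [← h1']; exact h.hr1
  · exact lt_trans h.hr1 (h.hr 1 i le_rfl h1' h2)

lemma rhopos {i : ℕ} (h1 : 1 ≤ i) (h2 : i ≤ m) : 0 < r i / g i :=
  div_pos (h.rpos h1 h2) (h.gpos h1 h2)

lemma gmono {i j : ℕ} (h1 : 1 ≤ i) (h2 : i ≤ j) (h3 : j ≤ m) : g i ≤ g j := by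
  rcases eq_or_lt_of_le h2 with h2' | h2'
  · rw [h2']
  · exact le_of_lt (h.hg i j h1 h2' h3)

lemma rmono {i j : ℕ} (h1 : 1 ≤ i) (h2 : i ≤ j) (h3 : j ≤ m) : r i ≤ r j := by
  rcases eq_or_lt_of_le h2 with h2' | h2'
  · rw [h2']
  · exact le_of_lt (h.hr i j h1 h2' h3)

/-- Powers of 8: a strictly smaller machine rate is at most one eighth. -/
lemma r8 {a b : ℕ} (ha1 : 1 ≤ a) (ha2 : a ≤ m) (hb1 : 1 ≤ b) (hb2 : b ≤ m)
    (hab : r a < r b) : 8 * r a ≤ r b := by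
  obtain ⟨na, hna⟩ := h.hr8 a ha1 ha2
  obtain ⟨nb, hnb⟩ := h.hr8 b hb1 hb2
  rw [hna, hnb] at hab ⊢
  have h8 : (1 : ℝ) < 8 := by norm_num
  have : na < nb := by
    by_contra hc
    exact absurd (zpow_le_zpow_right₀ (le_of_lt h8) (not_lt.mp hc)) (not_le.mpr hab)
  calc 8 * (8 : ℝ) ^ na = 8 ^ (na + 1) := by
        rw [zpow_add₀ (by norm_num : (8:ℝ) ≠ 0)]; ring
    _ ≤ 8 ^ nb := zpow_le_zpow_right₀ (le_of_lt h8) (by omega)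

end OK

section Pfacts

variable {m : ℕ} {g r : ℕ → ℝ}

lemma mem_pset {i j : ℕ} : j ∈ pset m g r i ↔ j ≤ m ∧ i < j ∧ r j / g j < r i / g i :=
  Iff.rfl

lemma p_mem {i : ℕ} (h : pdef m g r i) : p m g r i ∈ pset m g r i := Nat.sInf_mem h

lemma p_le_of_mem {i j : ℕ} (h : j ∈ pset m g r i) : p m g r i ≤ j := Nat.sInf_le h

lemma p_eq_zero {i : ℕ} (h : ¬ pdef m g r i) : p m g r i = 0 := by
  rw [p, Set.not_nonempty_iff_eq_empty.mp h, Nat.sInf_empty]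

lemma pdef_of_p_pos {i : ℕ} (h : 1 ≤ p m g r i) : pdef m g r i := by
  by_contra hc
  rw [p_eq_zero hc] at h; omega

lemma lt_p {i : ℕ} (h : pdef m g r i) : i < p m g r i := (p_mem h).2.1

lemma p_le_m {i : ℕ} (h : pdef m g r i) : p m g r i ≤ m := (p_mem h).1

lemma rho_p_lt {i : ℕ} (h : pdef m g r i) :
    r (p m g r i) / g (p m g r i) < r i / g i := (p_mem h).2.2

lemma P_refl (k : ℕ) : k ∈ P m g r k := Relation.ReflTransGen.refl

lemma p_mem_P {k : ℕ} (h : pdef m g r k) : p m g r k ∈ P m g r k :=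
  Relation.ReflTransGen.single ⟨h, rfl⟩

lemma P_trans {k z w : ℕ} (h1 : z ∈ P m g r k) (h2 : w ∈ P m g r z) : w ∈ P m g r k :=
  Relation.ReflTransGen.trans h1 h2

lemma P_ge {k z : ℕ} (h : z ∈ P m g r k) : k ≤ z := by
  induction h with
  | refl => exact le_rfl
  | tail _ hbc ih => exact le_trans ih (le_of_lt (hbc.2 ▸ lt_p hbc.1))

lemma P_Icc {k z : ℕ} (hk1 : 1 ≤ k) (hk2 : k ≤ m) (h : z ∈ P m g r k) :
    1 ≤ z ∧ z ≤ m := by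
  induction h with
  | refl => exact ⟨hk1, hk2⟩
  | tail _ hbc ih =>
      rw [hbc.2]
      exact ⟨le_trans ih.1 (le_of_lt (lt_p hbc.1)), p_le_m hbc.1⟩

lemma P_cases {k z : ℕ} (h : z ∈ P m g r k) :
    z = k ∨ (pdef m g r k ∧ z ∈ P m g r (p m g r k)) := by
  rcases Relation.ReflTransGen.cases_head h with h1 | ⟨c, hc1, hc2⟩
  · exact Or.inl h1.symm
  · exact Or.inr ⟨hc1.1, hc1.2 ▸ hc2⟩

lemma P_pred {k z : ℕ} (h : z ∈ P m g r k) (hne : z ≠ k) :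
    ∃ w, w ∈ P m g r k ∧ pdef m g r w ∧ p m g r w = z := by
  rcases Relation.ReflTransGen.cases_tail h with h1 | ⟨c, hc1, hc2⟩
  · exact absurd h1 hne
  · exact ⟨c, hc1, hc2.1, hc2.2.symm⟩

lemma P_antisymm {a b : ℕ} (h1 : a ∈ P m g r b) (h2 : b ∈ P m g r a) : a = b :=
  le_antisymm (P_ge h2) (P_ge h1)

lemma mem_P_iterate {k z : ℕ} :
    z ∈ P m g r k ↔ ∃ n, (∀ j < n, pdef m g r ((p m g r)^[j] k)) ∧ z = (p m g r)^[n] k := by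
  constructor
  · intro h
    induction h with
    | refl => exact ⟨0, by omega, rfl⟩
    | tail _ hbc ih =>
        obtain ⟨n, hd, rfl⟩ := ih
        refine ⟨n + 1, ?_, ?_⟩
        · intro j hj
          rcases Nat.lt_succ_iff_lt_or_eq.mp hj with hj | hj
          · exact hd j hj
          · rw [hj]; exact hbc.1
        · rw [Function.iterate_succ_apply', hbc.2]
  · rintro ⟨n, hd, rfl⟩
    induction n with
    | zero => exact Relation.ReflTransGen.refl
    | succ n ih =>
        rw [Function.iterate_succ_apply']
        exact Relation.ReflTransGen.tail (ih (fun j hj => hd j (by omega)))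
          ⟨hd n (by omega), rfl⟩

lemma P_total {k a b : ℕ} (ha : a ∈ P m g r k) (hb : b ∈ P m g r k) :
    a ∈ P m g r b ∨ b ∈ P m g r a := by
  obtain ⟨n, hdn, rfl⟩ := mem_P_iterate.mp ha
  obtain ⟨n', hdn', rfl⟩ := mem_P_iterate.mp hb
  rcases le_total n n' with hle | hle
  · refine Or.inr (mem_P_iterate.mpr ⟨n' - n, ?_, ?_⟩)
    · intro j hj
      rw [← Function.iterate_add_apply]
      exact hdn' (j + n) (by omega)
    · rw [← Function.iterate_add_apply]
      congr 1; omega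
  · refine Or.inl (mem_P_iterate.mpr ⟨n - n', ?_, ?_⟩)
    · intro j hj
      rw [← Function.iterate_add_apply]
      exact hdn (j + n') (by omega)
    · rw [← Function.iterate_add_apply]
      congr 1; omega

lemma exists_root {k : ℕ} (hk1 : 1 ≤ k) (hk2 : k ≤ m) :
    ∃ a, a ∈ P m g r k ∧ ¬ pdef m g r a := by
  have : ∀ d k, 1 ≤ k → k ≤ m → m - k ≤ d → ∃ a, a ∈ P m g r k ∧ ¬ pdef m g r a := by
    intro d
    induction d with
    | zero =>
        intro k hk1 hk2 hd
        have hkm : k = m := by omega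
        by_cases hp : pdef m g r k
        · exact absurd (p_le_m hp) (by have := lt_p hp; omega)
        · exact ⟨k, P_refl k, hp⟩
    | succ d ih =>
        intro k hk1 hk2 hd
        by_cases hp : pdef m g r k
        · obtain ⟨a, ha1, ha2⟩ := ih (p m g r k) (by have := lt_p hp; omega)
            (p_le_m hp) (by have := lt_p hp; omega)
          exact ⟨a, P_trans (p_mem_P hp) ha1, ha2⟩
        · exact ⟨k, P_refl k, hp⟩
  exact this (m - k) k hk1 hk2 le_rfl

lemma rho_P_le (h : OK m g r) {k z : ℕ} (hk1 : 1 ≤ k) (hk2 : k ≤ m)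
    (hz : z ∈ P m g r k) : r z / g z ≤ r k / g k := by
  induction hz with
  | refl => exact le_rfl
  | tail hab hbc ih => exact le_trans (le_of_lt (hbc.2 ▸ rho_p_lt hbc.1)) ih

/-- Among siblings (equal `p`-value), the one with smaller index has no larger
normalized cost. -/
lemma rho_sib_le (h : OK m g r) {z w : ℕ} (hz1 : 1 ≤ z) (hz2 : z ≤ m)
    (hw2 : w ≤ m) (hzw : z < w) (hp : p m g r z = p m g r w) :
    r z / g z ≤ r w / g w := by
  by_contra hc
  have hw : w ∈ pset m g r z := ⟨hw2, hzw, not_le.mp hc⟩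
  have hdz : pdef m g r z := ⟨w, hw⟩
  have h1 : p m g r z ≤ w := p_le_of_mem hw
  have h2 : z < p m g r z := lt_p hdz
  have hdw : pdef m g r w := pdef_of_p_pos (by omega)
  have := lt_p hdw
  omega

end Pfacts


section Tfacts

variable {m : ℕ} {g r : ℕ → ℝ}

lemma mem_y {i z : ℕ} :
    z ∈ y m g r i ↔ 1 ≤ z ∧ z ≤ m ∧ z < i ∧ p m g r z = p m g r i := Iff.rfl

lemma mem_A {i z : ℕ} : z ∈ A m g r i ↔ 1 ≤ z ∧ z ≤ m ∧ i ∈ P m g r z := Iff.rfl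

lemma mem_T {k z : ℕ} :
    z ∈ T m g r k ↔ z = k ∨ ∃ a ∈ P m g r k, z ∈ y m g r a := by
  simp only [T, Set.mem_union, Set.mem_singleton_iff, Set.mem_iUnion, exists_prop]

lemma T_self (k : ℕ) : k ∈ T m g r k := mem_T.mpr (Or.inl rfl)

lemma T_Icc {k z : ℕ} (hk1 : 1 ≤ k) (hk2 : k ≤ m) (hz : z ∈ T m g r k) :
    1 ≤ z ∧ z ≤ m := by
  rcases mem_T.mp hz with hz | ⟨a, _, hz⟩
  · exact hz ▸ ⟨hk1, hk2⟩
  · exact ⟨hz.1, hz.2.1⟩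

lemma mem_TIcc {k z : ℕ} (hk1 : 1 ≤ k) (hk2 : k ≤ m) :
    z ∈ TIcc m g r k ↔ z ∈ T m g r k := by
  rw [TIcc, Finset.mem_filter]
  constructor
  · exact fun h => h.2
  · intro h
    refine ⟨?_, h⟩
    have := T_Icc hk1 hk2 h
    simp [Finset.mem_Icc, this.1, this.2]

lemma self_mem_TIcc {k : ℕ} (hk1 : 1 ≤ k) (hk2 : k ≤ m) : k ∈ TIcc m g r k :=
  (mem_TIcc hk1 hk2).mpr (T_self k)

/-- Normalized cost of a `T`-node is at most that of the root `k`. -/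
lemma rho_T_le (h : OK m g r) {k z : ℕ} (hk1 : 1 ≤ k) (hk2 : k ≤ m)
    (hz : z ∈ T m g r k) : r z / g z ≤ r k / g k := by
  rcases mem_T.mp hz with rfl | ⟨a, ha, hzy⟩
  · exact le_rfl
  · obtain ⟨ha1, ha2⟩ := P_Icc hk1 hk2 ha
    exact le_trans (rho_sib_le h hzy.1 hzy.2.1 ha2 hzy.2.2.1 hzy.2.2.2)
      (rho_P_le h hk1 hk2 ha)

/-- A strict ancestor of `k` is never a `T(k)`-node. -/
lemma path_T {k z : ℕ} (hk1 : 1 ≤ k) (hz : z ∈ P m g r k) (hzT : z ∈ T m g r k) :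
    z = k := by
  rcases mem_T.mp hzT with hz' | ⟨b, hb, hzy⟩
  · exact hz'
  · exfalso
    rcases P_total hz hb with hc | hc
    · have h1 := P_ge hc
      have h2 := hzy.2.2.1
      omega
    · -- b ∈ P z, b ≠ z since z < b
      have hbz : b ≠ z := by have := hzy.2.2.1; omega
      rcases P_cases hc with h1 | ⟨hdz, h1⟩
      · exact hbz h1
      · -- b ∈ P (p z) = P (p b)
        rw [hzy.2.2.2] at h1
        have h2 : p m g r b ≤ b := P_ge h1
        have hdb : pdef m g r b := by
          apply pdef_of_p_pos
          rw [← hzy.2.2.2]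
          have := lt_p hdz
          omega
        have := lt_p hdb
        omega

/-- Subtrees of distinct `T(k)`-nodes are disjoint. -/
lemma A_T_disjoint {k i j x : ℕ} (hk1 : 1 ≤ k) (hk2 : k ≤ m)
    (hi : i ∈ T m g r k) (hj : j ∈ T m g r k) (hij : i ≠ j)
    (hxi : x ∈ A m g r i) (hxj : x ∈ A m g r j) : False := by
  have key : ∀ i j, i ∈ T m g r k → j ∈ T m g r k → j ∈ P m g r i → j ≠ i → False := by
    intro i j hi hj hji hne
    rcases P_cases hji with h1 | ⟨hdi, h1⟩
    · exact hne h1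
    · rcases mem_T.mp hi with rfl | ⟨a, ha, hiy⟩
      · -- i = k ; j ∈ P (p k) ⊆ P k and j ∈ T k so j = k, yet j ≥ p k > k
        have hjk : j ∈ P m g r i := P_trans (p_mem_P hdi) h1
        have := path_T hk1 hjk hj
        have h2 := P_ge h1
        have h3 := lt_p hdi
        omega
      · -- i ∈ y a, a ∈ P k
        have hda : pdef m g r a := by
          apply pdef_of_p_pos
          rw [← hiy.2.2.2]
          have := lt_p hdi; have := hiy.1; omega
        rw [hiy.2.2.2] at h1
        have hj2 : j ∈ P m g r k := P_trans ha (P_trans (p_mem_P hda) h1)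
        have hjk := path_T hk1 hj2 hj
        have h2 := P_ge h1
        have h3 := lt_p hda
        have h4 := P_ge ha
        omega
  rcases P_total hxi.2.2 hxj.2.2 with hc | hc
  · exact key j i hj hi hc hij
  · exact key i j hi hj hc (Ne.symm hij)

/-- The boundary-crossing lemma: a node below `k` whose parent jumps past `k`
is a younger sibling of some ancestor of `k`. -/
lemma cross (h : OK m g r) {k x : ℕ} (hk1 : 1 ≤ k) (hk2 : k ≤ m)
    (hx1 : 1 ≤ x) (hxk : x < k) (hdx : pdef m g r x) (hq : k < p m g r x) :
    ∃ b ∈ P m g r k, x ∈ y m g r b := by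
  set q := p m g r x with hqdef
  have hqm : q ≤ m := p_le_m hdx
  have hqpset : q ∈ pset m g r x := p_mem hdx
  have main : ∀ d a, a ∈ P m g r k → x < a → a < q → q - a ≤ d →
      ∃ b ∈ P m g r k, x < b ∧ pdef m g r b ∧ p m g r b = q := by
    intro d
    induction d with
    | zero => intro a _ _ h1 h2; omega
    | succ d ih =>
        intro a ha hxa haq hle
        have ha1 : 1 ≤ a ∧ a ≤ m := P_Icc hk1 hk2 ha
        have hrho : r a / g a ≥ r x / g x := by
          by_contra hc
          have : a ∈ pset m g r x := ⟨ha1.2, hxa, not_le.mp hc⟩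
          have := p_le_of_mem this
          omega
        have hqa : q ∈ pset m g r a :=
          ⟨hqm, haq, lt_of_lt_of_le hqpset.2.2 hrho⟩
        have hda : pdef m g r a := ⟨q, hqa⟩
        have hpa_le : p m g r a ≤ q := p_le_of_mem hqa
        have hpa_gt : a < p m g r a := lt_p hda
        rcases eq_or_lt_of_le hpa_le with heq | hlt
        · exact ⟨a, ha, hxa, hda, heq⟩
        · exact ih (p m g r a) (P_trans ha (p_mem_P hda)) (by omega) hlt (by omega)
  obtain ⟨b, hb, hxb, hdb, hpb⟩ := main (q - k) k (P_refl k) hxk hq le_rfl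
  exact ⟨b, hb, ⟨hx1, le_trans hxk.le hk2, hxb, by rw [hpb]⟩⟩

/-- Coverage: every machine type `x ≤ k` lies in the subtree of some `T(k)`-node. -/
lemma T_cover (h : OK m g r) {k : ℕ} (hk1 : 1 ≤ k) (hk2 : k ≤ m) :
    ∀ x, 1 ≤ x → x ≤ k → ∃ i ∈ T m g r k, x ∈ A m g r i := by
  have main : ∀ d x, 1 ≤ x → x ≤ k → k - x ≤ d → ∃ i ∈ T m g r k, x ∈ A m g r i := by
    intro d
    induction d with
    | zero =>
        intro x hx1 hxk hd
        have hxe : x = k := by omega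
        subst hxe
        exact ⟨x, T_self x, ⟨hx1, le_trans hxk hk2, P_refl x⟩⟩
    | succ d ih =>
        intro x hx1 hxk hd
        by_cases hPk : k ∈ P m g r x
        · exact ⟨k, T_self k, ⟨hx1, le_trans hxk hk2, hPk⟩⟩
        have hxk' : x < k := by
          rcases eq_or_lt_of_le hxk with hc | hc
          · exact absurd (hc ▸ P_refl x) hPk
          · exact hc
        by_cases hdx : pdef m g r x
        · rcases lt_trichotomy (p m g r x) k with hlt | heq | hgt
          · obtain ⟨i, hi, hAi⟩ := ih (p m g r x) (by have := lt_p hdx; omega)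
              (le_of_lt hlt) (by have := lt_p hdx; omega)
            exact ⟨i, hi, ⟨hx1, le_trans hxk hk2, P_trans (p_mem_P hdx) hAi.2.2⟩⟩
          · exact absurd (heq ▸ p_mem_P hdx) hPk
          · obtain ⟨b, hb, hby⟩ := cross h hk1 hk2 hx1 hxk' hdx hgt
            exact ⟨x, mem_T.mpr (Or.inr ⟨b, hb, hby⟩),
              ⟨hx1, le_trans hxk hk2, P_refl x⟩⟩
        · -- x is a root below k; it is a younger sibling of the root above k
          obtain ⟨a, ha, hda⟩ := exists_root hk1 hk2
          have ha1 := P_Icc hk1 hk2 ha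
          have hxa : x < a := lt_of_lt_of_le hxk' (P_ge ha)
          have hxy : x ∈ y m g r a :=
            ⟨hx1, le_trans hxk hk2, hxa, by rw [p_eq_zero hdx, p_eq_zero hda]⟩
          exact ⟨x, mem_T.mpr (Or.inr ⟨a, ha, hxy⟩), ⟨hx1, le_trans hxk hk2, P_refl x⟩⟩
  exact fun x hx1 hxk => main (k - x) x hx1 hxk le_rfl

/-- Characterization of `idxT`. -/
lemma idxT_eq {k i x : ℕ} (hk1 : 1 ≤ k) (hk2 : k ≤ m)
    (hi : i ∈ T m g r k) (hx : x ∈ A m g r i) : idxT m g r k x = i := by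
  have hset : {j | j ∈ T m g r k ∧ x ∈ A m g r j} = {i} := by
    apply Set.eq_singleton_iff_unique_mem.mpr
    refine ⟨⟨hi, hx⟩, ?_⟩
    intro j hj
    by_contra hc
    exact A_T_disjoint hk1 hk2 hj.1 hi hc hj.2 hx
  rw [idxT, hset]
  have : ({i} : Set ℕ).Nonempty := ⟨i, rfl⟩
  have h2 := Nat.sInf_mem this
  simpa using h2

/-- Every strict descendant of `zd` lies in the subtree of a child of `zd`. -/
lemma child_cover {zd x : ℕ} (hx : x ∈ A m g r zd) (hne : x ≠ zd) :
    ∃ i, p m g r i = zd ∧ x ∈ A m g r i := by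
  obtain ⟨hx1, hx2, hPzd⟩ := hx
  have main : ∀ d x, 1 ≤ x → x ≤ m → zd ∈ P m g r x → x ≠ zd → zd - x ≤ d →
      ∃ i, p m g r i = zd ∧ x ∈ A m g r i := by
    intro d
    induction d with
    | zero =>
        intro x hx1 hx2 hP hne hd
        have := P_ge hP
        omega
    | succ d ih =>
        intro x hx1 hx2 hP hne hd
        rcases P_cases hP with h1 | ⟨hdx, h1⟩
        · exact absurd h1.symm hne
        rcases eq_or_ne (p m g r x) zd with heq | hne2
        · exact ⟨x, heq, ⟨hx1, hx2, P_refl x⟩⟩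
        · have hpx1 : 1 ≤ p m g r x := by have := lt_p hdx; omega
          have hpx2 : p m g r x ≤ m := p_le_m hdx
          have hge := P_ge h1
          have hgt := lt_p hdx
          obtain ⟨i, hpi, hAi⟩ := ih (p m g r x) hpx1 hpx2 h1 hne2 (by omega)
          exact ⟨i, hpi, ⟨hx1, hx2, P_trans (p_mem_P hdx) hAi.2.2⟩⟩
  have := P_ge hPzd
  exact main (zd - x) x hx1 hx2 hPzd hne le_rfl

lemma child_disjoint {zd i i' x : ℕ} (hzd1 : 1 ≤ zd)
    (hi : p m g r i = zd) (hi' : p m g r i' = zd) (hne : i ≠ i')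
    (hx : x ∈ A m g r i) (hx' : x ∈ A m g r i') : False := by
  have key : ∀ i i', p m g r i = zd → p m g r i' = zd → i' ∈ P m g r i → i' ≠ i → False := by
    intro i i' hi hi' hP hne
    rcases P_cases hP with h1 | ⟨hdi, h1⟩
    · exact hne h1
    · rw [hi] at h1
      have h2 := P_ge h1
      have hdi' : pdef m g r i' := pdef_of_p_pos (by omega)
      have := lt_p hdi'
      omega
  rcases P_total hx.2.2 hx'.2.2 with hc | hc
  · exact key i' i hi' hi hc hne
  · exact key i i' hi hi' hc (Ne.symm hne)

lemma chil_eq {zd i x : ℕ} (hzd1 : 1 ≤ zd) (hi : p m g r i = zd)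
    (hx : x ∈ A m g r i) : chil m g r zd x = i := by
  have hset : {j | p m g r j = zd ∧ x ∈ A m g r j} = {i} := by
    apply Set.eq_singleton_iff_unique_mem.mpr
    refine ⟨⟨hi, hx⟩, ?_⟩
    intro j hj
    by_contra hc
    exact child_disjoint hzd1 hj.1 hi hc hj.2 hx
  rw [chil, hset]
  have h2 := Nat.sInf_mem (⟨i, rfl⟩ : ({i} : Set ℕ).Nonempty)
  simpa using h2

/-- `zd` is not in the subtree of any of its children. -/
lemma zd_not_mem_child {zd i : ℕ} (hzd1 : 1 ≤ zd) (hi : p m g r i = zd)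
    (hx : zd ∈ A m g r i) : False := by
  have h1 := P_ge hx.2.2
  have hdi : pdef m g r i := pdef_of_p_pos (by omega)
  have := lt_p hdi
  omega

end Tfacts

section Jfacts

variable {ι : Type*} {m : ℕ} {g r : ℕ → ℝ} {s : ι → ℝ} {X : Finset ι}

/-- Total capacity bought at the top node. -/
noncomputable def Bq (m : ℕ) (g r : ℕ → ℝ) (s : ι → ℝ) (X : Finset ι) (zs : ℕ) : ℝ :=
  (⌈SH m g r s X zs / g zs⌉₊ : ℝ) * g zs

noncomputable def Sgt (m : ℕ) (g r : ℕ → ℝ) (s : ι → ℝ) (X : Finset ι) (zs i : ℕ) : ℝ :=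
  ∑ z ∈ (TIcc m g r zs).filter (fun z => i < z), SH m g r s X z

noncomputable def Sge (m : ℕ) (g r : ℕ → ℝ) (s : ι → ℝ) (X : Finset ι) (zs i : ℕ) : ℝ :=
  ∑ z ∈ (TIcc m g r zs).filter (fun z => i ≤ z), SH m g r s X z

lemma cn_eq (zs i : ℕ) :
    cn m g r s X zs i =
      if i = zs then (⌈SH m g r s X zs / g zs⌉₊ : ℝ)
      else if i ∈ T m g r zs then
        (if Sgt m g r s X zs i ≤ Bq m g r s X zs ∧ Bq m g r s X zs < Sge m g r s X zs i then
          (Sge m g r s X zs i - Bq m g r s X zs) / g i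
        else if Bq m g r s X zs < Sgt m g r s X zs i then SH m g r s X i / g i
        else 0)
      else 0 := rfl

lemma P_singleton {k z : ℕ} (hk : ¬ pdef m g r k) (hz : z ∈ P m g r k) : z = k := by
  rcases P_cases hz with h1 | ⟨h1, _⟩
  · exact h1
  · exact absurd h1 hk

lemma mty_spec (h : OK m g r) {J : ι} (hsJ : s J ≤ g m) :
    1 ≤ mty m g s J ∧ mty m g s J ≤ m ∧ s J ≤ g (mty m g s J) := by
  have hne : {z | 1 ≤ z ∧ z ≤ m ∧ s J ≤ g z}.Nonempty := ⟨m, h.hm, le_rfl, hsJ⟩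
  exact Nat.sInf_mem hne

lemma Ssum_nonneg (hs : ∀ J ∈ X, 0 < s J) {W : Finset ι} (hW : W ⊆ X) :
    0 ≤ Ssum s W :=
  Finset.sum_nonneg fun J hJ => le_of_lt (hs J (hW hJ))

lemma Ssum_pos (hs : ∀ J ∈ X, 0 < s J) {W : Finset ι} (hW : W ⊆ X)
    (hne : W.Nonempty) : 0 < Ssum s W :=
  Finset.sum_pos (fun J hJ => hs J (hW hJ)) hne

lemma mem_H {z : ℕ} {J : ι} :
    J ∈ H m g r s z X ↔ J ∈ X ∧ mty m g s J ∈ A m g r z := Finset.mem_filter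

lemma H_subset {z : ℕ} : H m g r s z X ⊆ X := Finset.filter_subset _ _

lemma SH_nonneg (hs : ∀ J ∈ X, 0 < s J) (z : ℕ) : 0 ≤ SH m g r s X z :=
  Ssum_nonneg hs H_subset

lemma k0_Icc (h : OK m g r) (hJ : X.Nonempty) (hs : ∀ J ∈ X, 0 < s J ∧ s J ≤ g m) :
    1 ≤ k0f m g s X ∧ k0f m g s X ≤ m := by
  obtain ⟨J0, hJ0⟩ := hJ
  constructor
  · exact le_trans (mty_spec h (hs J0 hJ0).2).1 (Finset.le_sup hJ0)
  · exact Finset.sup_le fun J hJmem => (mty_spec h (hs J hJmem).2).2.1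

lemma exists_k0 (hJ : X.Nonempty) : ∃ J ∈ X, mty m g s J = k0f m g s X := by
  obtain ⟨J, hJX, hEq⟩ := Finset.exists_mem_eq_sup X hJ (fun J => mty m g s J)
  exact ⟨J, hJX, hEq.symm⟩

/-- `zdia` belongs to `P (k0)` and is decent. -/
lemma zdia_spec (h : OK m g r) (hJ : X.Nonempty) (hs : ∀ J ∈ X, 0 < s J ∧ s J ≤ g m) :
    zdia m g r s X ∈ P m g r (k0f m g s X) ∧ decent m g r s X (zdia m g r s X) := by
  obtain ⟨hk1, hk2⟩ := k0_Icc h hJ hs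
  obtain ⟨a, ha, hda⟩ := exists_root (m := m) (g := g) (r := r) hk1 hk2
  have hdec : decent m g r s X a := by
    intro zt hzt hne
    exact absurd (P_singleton hda hzt) hne
  have hne2 : {zs | zs ∈ P m g r (k0f m g s X) ∧ decent m g r s X zs}.Nonempty :=
    ⟨a, ha, hdec⟩
  exact Nat.sInf_mem hne2

lemma zdia_min {zs : ℕ} (hzs : zs ∈ P m g r (k0f m g s X))
    (hdec : decent m g r s X zs) : zdia m g r s X ≤ zs :=
  Nat.sInf_le ⟨hzs, hdec⟩

lemma zdia_Icc (h : OK m g r) (hJ : X.Nonempty) (hs : ∀ J ∈ X, 0 < s J ∧ s J ≤ g m) :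
    1 ≤ zdia m g r s X ∧ zdia m g r s X ≤ m := by
  obtain ⟨hk1, hk2⟩ := k0_Icc h hJ hs
  exact P_Icc hk1 hk2 (zdia_spec h hJ hs).1

/-- Partition of the whole job set over the `T(zd)`-nodes. -/
lemma sum_partition (h : OK m g r) {zd : ℕ} (hzd1 : 1 ≤ zd) (hzd2 : zd ≤ m)
    (hcov : ∀ J ∈ X, 1 ≤ mty m g s J ∧ mty m g s J ≤ zd) (F : ι → ℝ) :
    ∑ J ∈ X, F J = ∑ i ∈ TIcc m g r zd, ∑ J ∈ H m g r s i X, F J := by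
  have hdisj : Set.PairwiseDisjoint ↑(TIcc m g r zd) (fun i => H m g r s i X) := by
    intro i hi j hj hij
    have hiT := (mem_TIcc hzd1 hzd2).mp (Finset.mem_coe.mp hi)
    have hjT := (mem_TIcc hzd1 hzd2).mp (Finset.mem_coe.mp hj)
    simp only [Function.onFun]
    rw [Finset.disjoint_left]
    intro J hJi hJj
    exact A_T_disjoint hzd1 hzd2 hiT hjT hij (mem_H.mp hJi).2 (mem_H.mp hJj).2
  have hX : X = (TIcc m g r zd).biUnion (fun i => H m g r s i X) := by
    ext J
    simp only [Finset.mem_biUnion]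
    constructor
    · intro hJX
      obtain ⟨h1, h2⟩ := hcov J hJX
      obtain ⟨i, hiT, hiA⟩ := T_cover h hzd1 hzd2 (mty m g s J) h1 h2
      exact ⟨i, (mem_TIcc hzd1 hzd2).mpr hiT, mem_H.mpr ⟨hJX, hiA⟩⟩
    · rintro ⟨i, _, hJH⟩
      exact (mem_H.mp hJH).1
  conv_lhs => rw [hX]
  exact Finset.sum_biUnion hdisj

/-- Partition of the `zd`-subtree jobs into exact-type-`zd` jobs and children subtrees. -/
lemma sum_child_partition (h : OK m g r) {zd : ℕ} (hzd1 : 1 ≤ zd) (hzd2 : zd ≤ m)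
    (F : ι → ℝ) :
    ∑ J ∈ H m g r s zd X, F J =
      ∑ J ∈ X.filter (fun J' => mty m g s J' = zd), F J
        + ∑ i ∈ fchFin m g r zd, ∑ J ∈ H m g r s i X, F J := by
  have hdisj : Set.PairwiseDisjoint ↑(fchFin m g r zd) (fun i => H m g r s i X) := by
    intro i hi j hj hij
    simp only [Finset.mem_coe, fchFin, Finset.mem_filter] at hi hj
    simp only [Function.onFun]
    rw [Finset.disjoint_left]
    intro J hJi hJj
    exact child_disjoint hzd1 hi.2 hj.2 hij (mem_H.mp hJi).2 (mem_H.mp hJj).2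
  have hsplit : H m g r s zd X =
      (X.filter (fun J' => mty m g s J' = zd)) ∪
        (fchFin m g r zd).biUnion (fun i => H m g r s i X) := by
    ext J
    simp only [Finset.mem_union, Finset.mem_biUnion, mem_H, Finset.mem_filter]
    constructor
    · rintro ⟨hJX, hA⟩
      rcases eq_or_ne (mty m g s J) zd with heq | hne
      · exact Or.inl ⟨hJX, heq⟩
      · obtain ⟨i, hpi, hAi⟩ := child_cover hA hne
        have hiIcc := P_Icc hA.1 hA.2.1 hAi.2.2
        refine Or.inr ⟨i, ?_, ⟨hJX, hAi⟩⟩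
        rw [fchFin, Finset.mem_filter, Finset.mem_Icc]
        exact ⟨⟨hiIcc.1, hiIcc.2⟩, hpi⟩
    · rintro (⟨hJX, heq⟩ | ⟨i, hiF, hJX, hAi⟩)
      · refine ⟨hJX, ?_⟩
        rw [heq]
        exact ⟨hzd1, hzd2, P_refl zd⟩
      · rw [fchFin, Finset.mem_filter] at hiF
        have hdi : pdef m g r i := pdef_of_p_pos (by omega)
        exact ⟨hJX, ⟨hAi.1, hAi.2.1,
          P_trans hAi.2.2 (hiF.2 ▸ p_mem_P hdi)⟩⟩
  have hdisj2 : Disjoint (X.filter (fun J' => mty m g s J' = zd))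
      ((fchFin m g r zd).biUnion (fun i => H m g r s i X)) := by
    rw [Finset.disjoint_left]
    intro J hJ1 hJ2
    rw [Finset.mem_filter] at hJ1
    rw [Finset.mem_biUnion] at hJ2
    obtain ⟨i, hiF, hJi⟩ := hJ2
    rw [fchFin, Finset.mem_filter] at hiF
    exact zd_not_mem_child hzd1 hiF.2 (hJ1.2 ▸ (mem_H.mp hJi).2)
  rw [hsplit, Finset.sum_union hdisj2, Finset.sum_biUnion hdisj]

lemma cn_self {zs : ℕ} : cn m g r s X zs zs = (⌈SH m g r s X zs / g zs⌉₊ : ℝ) := by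
  rw [cn_eq, if_pos rfl]

lemma Sge_split {zs z : ℕ} (hz : z ∈ TIcc m g r zs) :
    Sge m g r s X zs z = SH m g r s X z + Sgt m g r s X zs z := by
  have hf : (TIcc m g r zs).filter (fun w => z ≤ w)
      = insert z ((TIcc m g r zs).filter (fun w => z < w)) := by
    ext w
    simp only [Finset.mem_filter, Finset.mem_insert]
    constructor
    · rintro ⟨hw, hle⟩
      rcases eq_or_lt_of_le hle with heq | hlt
      · exact Or.inl heq.symm
      · exact Or.inr ⟨hw, hlt⟩
    · rintro (rfl | ⟨hw, hlt⟩)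
      · exact ⟨hz, le_rfl⟩
      · exact ⟨hw, le_of_lt hlt⟩
  rw [Sge, Sgt, hf, Finset.sum_insert (by simp)]

lemma Sgt_nonneg (hs : ∀ J ∈ X, 0 < s J) (zs i : ℕ) : 0 ≤ Sgt m g r s X zs i :=
  Finset.sum_nonneg fun z _ => SH_nonneg hs z

lemma Bq_nonneg (h : OK m g r) {zs : ℕ} (h1 : 1 ≤ zs) (h2 : zs ≤ m) :
    0 ≤ Bq m g r s X zs := by
  have hg0 := h.gpos h1 h2
  exact mul_nonneg (Nat.cast_nonneg _) (le_of_lt hg0)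

/-- For non-top nodes of the tree, `cn` is nonnegative. -/
lemma cn_nonneg (h : OK m g r) (hs : ∀ J ∈ X, 0 < s J) {zs z : ℕ}
    (hz1 : 1 ≤ z) (hz2 : z ≤ m) : 0 ≤ cn m g r s X zs z := by
  rcases eq_or_ne z zs with rfl | hne
  · rw [cn_self]; positivity
  · rw [cn_eq, if_neg hne]
    by_cases hT : z ∈ T m g r zs
    · rw [if_pos hT]
      have hg0 := h.gpos hz1 hz2
      split_ifs with h1 h2
      · have hBS := h1.2
        exact div_nonneg (by linarith) (le_of_lt hg0)
      · exact div_nonneg (SH_nonneg hs z) (le_of_lt hg0)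
      · exact le_rfl
    · rw [if_neg hT]

/-- For non-top nodes, the `cn`-cost is at most the fractional load cost. -/
lemma cn_mul_le (h : OK m g r) (hs : ∀ J ∈ X, 0 < s J) {zs z : ℕ}
    (hzs1 : 1 ≤ zs) (hzs2 : zs ≤ m) (hz : z ∈ TIcc m g r zs) (hne : z ≠ zs) :
    cn m g r s X zs z * r z ≤ SH m g r s X z * (r z / g z) := by
  have hzIcc := T_Icc hzs1 hzs2 ((mem_TIcc hzs1 hzs2).mp hz)
  have hgz := h.gpos hzIcc.1 hzIcc.2
  have hrz := h.rpos hzIcc.1 hzIcc.2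
  have hrho : 0 ≤ r z / g z := le_of_lt (div_pos hrz hgz)
  rw [cn_eq, if_neg hne, if_pos ((mem_TIcc hzs1 hzs2).mp hz)]
  have hsge := Sge_split (s := s) (X := X) hz
  split_ifs with h1 h2
  · have key : Sge m g r s X zs z - Bq m g r s X zs ≤ SH m g r s X z := by
      have := h1.1; linarith
    calc (Sge m g r s X zs z - Bq m g r s X zs) / g z * r z
        = (Sge m g r s X zs z - Bq m g r s X zs) * (r z / g z) := by ring
      _ ≤ SH m g r s X z * (r z / g z) := mul_le_mul_of_nonneg_right key hrho
  · calc SH m g r s X z / g z * r z = SH m g r s X z * (r z / g z) := by ring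
      _ ≤ _ := le_rfl
  · rw [zero_mul]
    exact mul_nonneg (SH_nonneg (m := m) (g := g) (r := r) hs z) hrho

end Jfacts

section Telescope

/-- Telescoping bound for capped suffix sums. -/
lemma telescope_bound (B : ℝ) (hB : 0 ≤ B) (S : ℕ → ℝ) (F : Finset ℕ)
    (hS : ∀ z, 0 ≤ S z) (G : Finset ℕ) :
    G ⊆ F → ∀ a, (∀ x ∈ G, a < x) →
      ∑ z ∈ G, (min B (∑ w ∈ F.filter (fun w => z ≤ w), S w)
        - min B (∑ w ∈ F.filter (fun w => z < w), S w))
      ≤ min B (∑ w ∈ F.filter (fun w => a < w), S w) := by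
  induction G using Finset.induction_on_min with
  | empty =>
      intro _ a _
      rw [Finset.sum_empty]
      exact le_min hB (Finset.sum_nonneg fun w _ => hS w)
  | insert a0 G0 hlt ih =>
      intro hsub b hb
      have ha0 : a0 ∉ G0 := fun hc => lt_irrefl a0 (hlt a0 hc)
      rw [Finset.sum_insert ha0]
      have h1 : ∑ z ∈ G0, (min B (∑ w ∈ F.filter (fun w => z ≤ w), S w)
          - min B (∑ w ∈ F.filter (fun w => z < w), S w))
          ≤ min B (∑ w ∈ F.filter (fun w => a0 < w), S w) :=
        ih (fun x hx => hsub (Finset.mem_insert_of_mem hx)) a0 hlt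
      have h2 : (∑ w ∈ F.filter (fun w => a0 ≤ w), S w)
          ≤ ∑ w ∈ F.filter (fun w => b < w), S w := by
        apply Finset.sum_le_sum_of_subset_of_nonneg
        · intro w hw
          rw [Finset.mem_filter] at hw ⊢
          have := hb a0 (Finset.mem_insert_self a0 G0)
          exact ⟨hw.1, by omega⟩
        · exact fun w _ _ => hS w
      have h3 : min B (∑ w ∈ F.filter (fun w => a0 ≤ w), S w)
          ≤ min B (∑ w ∈ F.filter (fun w => b < w), S w) :=
        min_le_min le_rfl h2
      linarith

end Telescope

section Deficit

variable {ι : Type*} {m : ℕ} {g r : ℕ → ℝ} {s : ι → ℝ} {X : Finset ι}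

/-- Per-node deficit bound for the lower bound direction. -/
lemma node_deficit (h : OK m g r) (hs : ∀ J ∈ X, 0 < s J) {zd z : ℕ}
    (hzd1 : 1 ≤ zd) (hzd2 : zd ≤ m) (hz : z ∈ TIcc m g r zd) (hne : z ≠ zd) :
    SH m g r s X z * (r z / g z) - 2 * (cn m g r s X zd z * r z)
      ≤ (r zd / g zd) *
        (min (Bq m g r s X zd) (Sge m g r s X zd z)
          - min (Bq m g r s X zd) (Sgt m g r s X zd z)) := by
  have hzT := (mem_TIcc hzd1 hzd2).mp hz
  have hzIcc := T_Icc hzd1 hzd2 hzT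
  have hgz := h.gpos hzIcc.1 hzIcc.2
  have hrz := h.rpos hzIcc.1 hzIcc.2
  have hrho : 0 ≤ r z / g z := le_of_lt (div_pos hrz hgz)
  have hrhozd : 0 ≤ r zd / g zd := le_of_lt (h.rhopos hzd1 hzd2)
  have hrhole : r z / g z ≤ r zd / g zd := rho_T_le h hzd1 hzd2 hzT
  have hsge : Sge m g r s X zd z = SH m g r s X z + Sgt m g r s X zd z :=
    Sge_split hz
  have hSH := SH_nonneg (m := m) (g := g) (r := r) hs (X := X) z
  have hSgt := Sgt_nonneg (m := m) (g := g) (r := r) hs (X := X) zd z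
  rw [cn_eq, if_neg hne, if_pos hzT]
  split_ifs with h1 h2
  · -- boundary node
    obtain ⟨h1a, h1b⟩ := h1
    rw [min_eq_left (le_of_lt h1b), min_eq_right h1a]
    have e1 : (Sge m g r s X zd z - Bq m g r s X zd) / g z * r z
        = (Sge m g r s X zd z - Bq m g r s X zd) * (r z / g z) := by ring
    rw [e1]
    have e2 : SH m g r s X z = Sge m g r s X zd z - Sgt m g r s X zd z := by linarith
    rw [e2]
    have f1 : (Sge m g r s X zd z - Sgt m g r s X zd z) * (r z / g z)
        - 2 * ((Sge m g r s X zd z - Bq m g r s X zd) * (r z / g z))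
        - (Bq m g r s X zd - Sgt m g r s X zd z) * (r z / g z)
        = (Bq m g r s X zd - Sge m g r s X zd z) * (r z / g z) := by ring
    have f2 : (Bq m g r s X zd - Sge m g r s X zd z) * (r z / g z) ≤ 0 :=
      mul_nonpos_iff.mpr (Or.inr ⟨by linarith, hrho⟩)
    have f3 : (Bq m g r s X zd - Sgt m g r s X zd z) * (r z / g z)
        ≤ (r zd / g zd) * (Bq m g r s X zd - Sgt m g r s X zd z) := by
      rw [mul_comm (r zd / g zd)]
      exact mul_le_mul_of_nonneg_left hrhole (by linarith)
    linarith
  · -- fully bought node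
    have e1 : SH m g r s X z / g z * r z = SH m g r s X z * (r z / g z) := by ring
    rw [e1]
    have hmin : min (Bq m g r s X zd) (Sgt m g r s X zd z)
        ≤ min (Bq m g r s X zd) (Sge m g r s X zd z) :=
      min_le_min le_rfl (by linarith)
    have f4 : 0 ≤ (r zd / g zd) * (min (Bq m g r s X zd) (Sge m g r s X zd z)
        - min (Bq m g r s X zd) (Sgt m g r s X zd z)) :=
      mul_nonneg hrhozd (by linarith)
    linarith [mul_nonneg hSH hrho]
  · -- zero node
    push_neg at h1
    have hSgtB : Sgt m g r s X zd z ≤ Bq m g r s X zd := not_lt.mp h2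
    have hSgeB : Sge m g r s X zd z ≤ Bq m g r s X zd := h1 hSgtB
    have e1 : (r zd / g zd) * (Sge m g r s X zd z - Sgt m g r s X zd z)
        = SH m g r s X z * (r zd / g zd) := by rw [hsge]; ring
    rw [min_eq_right hSgeB, min_eq_right hSgtB, e1]
    have hm := mul_le_mul_of_nonneg_left hrhole hSH
    linarith [hm]

/-- Summed deficit bound: the total "shortfall" is at most the top capacity cost. -/
lemma deficit_total (h : OK m g r) (hs : ∀ J ∈ X, 0 < s J) {zd : ℕ}
    (hzd1 : 1 ≤ zd) (hzd2 : zd ≤ m) :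
    ∑ z ∈ (TIcc m g r zd).erase zd,
        (SH m g r s X z * (r z / g z) - 2 * (cn m g r s X zd z * r z))
      ≤ (r zd / g zd) * Bq m g r s X zd := by
  have hB : 0 ≤ Bq m g r s X zd := Bq_nonneg h hzd1 hzd2
  have hstep : ∑ z ∈ (TIcc m g r zd).erase zd,
      (SH m g r s X z * (r z / g z) - 2 * (cn m g r s X zd z * r z))
      ≤ ∑ z ∈ (TIcc m g r zd).erase zd,
        ((r zd / g zd) * (min (Bq m g r s X zd) (Sge m g r s X zd z)
          - min (Bq m g r s X zd) (Sgt m g r s X zd z))) := by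
    apply Finset.sum_le_sum
    intro z hz
    exact node_deficit h hs hzd1 hzd2 (Finset.mem_of_mem_erase hz)
      (Finset.ne_of_mem_erase hz)
  rw [← Finset.mul_sum] at hstep
  have htel : ∑ z ∈ (TIcc m g r zd).erase zd,
      (min (Bq m g r s X zd) (Sge m g r s X zd z)
        - min (Bq m g r s X zd) (Sgt m g r s X zd z))
      ≤ Bq m g r s X zd := by
    have := telescope_bound (Bq m g r s X zd) hB (SH m g r s X) (TIcc m g r zd)
      (fun z => SH_nonneg hs z) ((TIcc m g r zd).erase zd)
      (Finset.erase_subset _ _) 0 ?hpos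
    · exact le_trans this (min_le_left _ _)
    · intro x hx
      have hxT := (mem_TIcc hzd1 hzd2).mp (Finset.mem_of_mem_erase hx)
      have := T_Icc hzd1 hzd2 hxT
      omega
  have hrhozd : 0 ≤ r zd / g zd := le_of_lt (h.rhopos hzd1 hzd2)
  calc ∑ z ∈ (TIcc m g r zd).erase zd,
        (SH m g r s X z * (r z / g z) - 2 * (cn m g r s X zd z * r z))
      ≤ (r zd / g zd) * ∑ z ∈ (TIcc m g r zd).erase zd,
          (min (Bq m g r s X zd) (Sge m g r s X zd z)
            - min (Bq m g r s X zd) (Sgt m g r s X zd z)) := hstep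
    _ ≤ (r zd / g zd) * Bq m g r s X zd := mul_le_mul_of_nonneg_left htel hrhozd

end Deficit

section Charge

variable {ι : Type*} {m : ℕ} {g r : ℕ → ℝ} {s : ι → ℝ} {X : Finset ι}

/-- The jobs of exact type `z⋄`. -/
noncomputable def HhF (m : ℕ) (g r : ℕ → ℝ) (s : ι → ℝ) (X : Finset ι) : Finset ι :=
  X.filter (fun J' => mty m g s J' = zdia m g r s X)

/-- The quantity `c` from the charging scheme. -/
noncomputable def cC (m : ℕ) (g r : ℕ → ℝ) (s : ι → ℝ) (X : Finset ι) : ℝ :=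
  Ssum s (HhF m g r s X) * (r (zdia m g r s X) / g (zdia m g r s X))
    + ∑ i ∈ fchFin m g r (zdia m g r s X), SH m g r s X i * (r i / g i)

/-- The denominator of `α*`. -/
noncomputable def DDf (m : ℕ) (g r : ℕ → ℝ) (s : ι → ℝ) (X : Finset ι) : ℝ :=
  ∑ i ∈ fchFin m g r (zdia m g r s X), ∑ J' ∈ H m g r s i X,
    s J' * (r i / g i - r (zdia m g r s X) / g (zdia m g r s X))

lemma charge_eq (J : ι) :
    charge m g r s X J =
      if mty m g s J ∈ A m g r (zdia m g r s X) then
        if g (zdia m g r s X) ≤ SH m g r s X (zdia m g r s X) then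
          s J * (r (zdia m g r s X) / g (zdia m g r s X))
        else if r (zdia m g r s X) < cC m g r s X then
          if mty m g s J = zdia m g r s X then
            s J * (r (zdia m g r s X) / g (zdia m g r s X))
          else
            s J * (r (chil m g r (zdia m g r s X) (mty m g s J)) /
                g (chil m g r (zdia m g r s X) (mty m g s J)) -
              (r (chil m g r (zdia m g r s X) (mty m g s J)) /
                  g (chil m g r (zdia m g r s X) (mty m g s J)) -
                r (zdia m g r s X) / g (zdia m g r s X)) *
                ((cC m g r s X - r (zdia m g r s X)) / DDf m g r s X))
        else
          if mty m g s J = zdia m g r s X then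
            s J * (r (zdia m g r s X) / g (zdia m g r s X)) *
              (1 + (r (zdia m g r s X) - cC m g r s X) /
                (Ssum s (HhF m g r s X) * (r (zdia m g r s X) / g (zdia m g r s X))))
          else
            s J * (r (chil m g r (zdia m g r s X) (mty m g s J)) /
              g (chil m g r (zdia m g r s X) (mty m g s J)))
      else
        s J * (r (idxT m g r (zdia m g r s X) (mty m g s J)) /
          g (idxT m g r (zdia m g r s X) (mty m g s J))) := rfl

variable (h : OK m g r) (hJ : X.Nonempty) (hs : ∀ J ∈ X, 0 < s J ∧ s J ≤ g m)
include h hJ hs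

/-- Every job's exact type lies in `[1, zdia]`. -/
lemma mty_cov : ∀ J ∈ X, 1 ≤ mty m g s J ∧ mty m g s J ≤ zdia m g r s X := by
  intro J hJX
  have h1 := (mty_spec h (hs J hJX).2).1
  have h2 : mty m g s J ≤ k0f m g s X := Finset.le_sup hJX
  have h3 : k0f m g s X ≤ zdia m g r s X := P_ge (zdia_spec h hJ hs).1
  exact ⟨h1, le_trans h2 h3⟩

/-- Total charge of the jobs hanging off a non-top `T`-node. -/
lemma charge_off {i : ℕ}
    (hi : i ∈ (TIcc m g r (zdia m g r s X)).erase (zdia m g r s X)) :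
    ∑ J ∈ H m g r s i X, charge m g r s X J
      = SH m g r s X i * (r i / g i) := by
  obtain ⟨hzd1, hzd2⟩ := zdia_Icc h hJ hs
  have hiT := (mem_TIcc hzd1 hzd2).mp (Finset.mem_of_mem_erase hi)
  have hine := Finset.ne_of_mem_erase hi
  have hterm : ∀ J ∈ H m g r s i X, charge m g r s X J = s J * (r i / g i) := by
    intro J hJm
    obtain ⟨hJX, hJA⟩ := mem_H.mp hJm
    have hnA : mty m g s J ∉ A m g r (zdia m g r s X) := fun hc =>
      A_T_disjoint hzd1 hzd2 hiT (T_self _) hine hJA hc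
    rw [charge_eq, if_neg hnA, idxT_eq hzd1 hzd2 hiT hJA]
  rw [Finset.sum_congr rfl hterm, SH, Ssum, Finset.sum_mul]

/-- Case 1: overloaded top node. -/
lemma charge_zd_case1 (hcase : g (zdia m g r s X) ≤ SH m g r s X (zdia m g r s X)) :
    ∑ J ∈ H m g r s (zdia m g r s X) X, charge m g r s X J
      = SH m g r s X (zdia m g r s X) *
          (r (zdia m g r s X) / g (zdia m g r s X)) := by
  have hterm : ∀ J ∈ H m g r s (zdia m g r s X) X,
      charge m g r s X J = s J * (r (zdia m g r s X) / g (zdia m g r s X)) := by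
    intro J hJm
    rw [charge_eq, if_pos (mem_H.mp hJm).2, if_pos hcase]
  rw [Finset.sum_congr rfl hterm, SH, Ssum, Finset.sum_mul]

/-- `SH zdia = Ssum Hh + ∑ children SH`. -/
lemma SH_split :
    SH m g r s X (zdia m g r s X)
      = Ssum s (HhF m g r s X)
        + ∑ i ∈ fchFin m g r (zdia m g r s X), SH m g r s X i := by
  obtain ⟨hzd1, hzd2⟩ := zdia_Icc h hJ hs
  exact sum_child_partition h hzd1 hzd2 s

/-- `DDf = cC - SH zdia * ρ zdia`. -/
lemma DDf_eq :
    DDf m g r s X = cC m g r s X - SH m g r s X (zdia m g r s X) *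
      (r (zdia m g r s X) / g (zdia m g r s X)) := by
  have hsh := SH_split h hJ hs
  rw [DDf, cC, hsh]
  have : ∀ i ∈ fchFin m g r (zdia m g r s X),
      ∑ J' ∈ H m g r s i X, s J' *
        (r i / g i - r (zdia m g r s X) / g (zdia m g r s X))
      = SH m g r s X i * (r i / g i)
        - SH m g r s X i * (r (zdia m g r s X) / g (zdia m g r s X)) := by
    intro i _
    rw [SH, Ssum, Finset.sum_mul, Finset.sum_mul, ← Finset.sum_sub_distrib]
    apply Finset.sum_congr rfl
    intro J _
    ring
  rw [Finset.sum_congr rfl this, Finset.sum_sub_distrib, ← Finset.sum_mul]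
  ring

/-- Case 2: underloaded top with expensive subtree (`c > r zd`). -/
lemma charge_zd_case2 (hcase : ¬ g (zdia m g r s X) ≤ SH m g r s X (zdia m g r s X))
    (hcc : r (zdia m g r s X) < cC m g r s X) :
    ∑ J ∈ H m g r s (zdia m g r s X) X, charge m g r s X J = r (zdia m g r s X) := by
  obtain ⟨hzd1, hzd2⟩ := zdia_Icc h hJ hs
  have hgzd := h.gpos hzd1 hzd2
  have hrho := h.rhopos hzd1 hzd2
  have hDD : 0 < DDf m g r s X := by
    rw [DDf_eq h hJ hs]
    have hSH : SH m g r s X (zdia m g r s X) * (r (zdia m g r s X) / g (zdia m g r s X))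
        < r (zdia m g r s X) := by
      have : SH m g r s X (zdia m g r s X) < g (zdia m g r s X) := not_le.mp hcase
      calc SH m g r s X (zdia m g r s X) * (r (zdia m g r s X) / g (zdia m g r s X))
          < g (zdia m g r s X) * (r (zdia m g r s X) / g (zdia m g r s X)) :=
            mul_lt_mul_of_pos_right this hrho
        _ = r (zdia m g r s X) := by field_simp
    linarith
  rw [sum_child_partition h hzd1 hzd2 (charge m g r s X)]
  have hHh : ∑ J ∈ X.filter (fun J' => mty m g s J' = zdia m g r s X),
      charge m g r s X J
      = Ssum s (HhF m g r s X) * (r (zdia m g r s X) / g (zdia m g r s X)) := by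
    have hterm : ∀ J ∈ X.filter (fun J' => mty m g s J' = zdia m g r s X),
        charge m g r s X J = s J * (r (zdia m g r s X) / g (zdia m g r s X)) := by
      intro J hJm
      rw [Finset.mem_filter] at hJm
      have hA : mty m g s J ∈ A m g r (zdia m g r s X) := by
        rw [hJm.2]; exact ⟨hzd1, hzd2, P_refl _⟩
      rw [charge_eq, if_pos hA, if_neg hcase, if_pos hcc, if_pos hJm.2]
    rw [Finset.sum_congr rfl hterm, HhF, Ssum, Finset.sum_mul]
  have hchild : ∀ i ∈ fchFin m g r (zdia m g r s X),
      ∑ J ∈ H m g r s i X, charge m g r s X J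
      = SH m g r s X i * (r i / g i)
        - (∑ J ∈ H m g r s i X, s J * (r i / g i - r (zdia m g r s X) / g (zdia m g r s X)))
          * ((cC m g r s X - r (zdia m g r s X)) / DDf m g r s X) := by
    intro i hiF
    rw [fchFin, Finset.mem_filter, Finset.mem_Icc] at hiF
    have hterm : ∀ J ∈ H m g r s i X, charge m g r s X J
        = s J * (r i / g i)
          - s J * (r i / g i - r (zdia m g r s X) / g (zdia m g r s X))
            * ((cC m g r s X - r (zdia m g r s X)) / DDf m g r s X) := by
      intro J hJm
      obtain ⟨hJX, hJA⟩ := mem_H.mp hJm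
      have hdi : pdef m g r i := pdef_of_p_pos (by omega)
      have hA : mty m g s J ∈ A m g r (zdia m g r s X) :=
        ⟨hJA.1, hJA.2.1, P_trans hJA.2.2 (hiF.2 ▸ p_mem_P hdi)⟩
      have hne : mty m g s J ≠ zdia m g r s X := by
        intro hc
        exact zd_not_mem_child hzd1 hiF.2 (hc ▸ hJA)
      rw [charge_eq, if_pos hA, if_neg hcase, if_pos hcc, if_neg hne,
        chil_eq hzd1 hiF.2 hJA]
      ring
    rw [Finset.sum_congr rfl hterm, Finset.sum_sub_distrib, SH, Ssum,
      Finset.sum_mul, Finset.sum_mul]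
  rw [hHh, Finset.sum_congr rfl hchild, Finset.sum_sub_distrib, ← Finset.sum_mul,
    ← DDf]
  have hx : DDf m g r s X * ((cC m g r s X - r (zdia m g r s X)) / DDf m g r s X)
      = cC m g r s X - r (zdia m g r s X) := by
    field_simp
  rw [hx]
  have hcdef : Ssum s (HhF m g r s X) * (r (zdia m g r s X) / g (zdia m g r s X))
      + ∑ i ∈ fchFin m g r (zdia m g r s X), SH m g r s X i * (r i / g i)
      = cC m g r s X := rfl
  linarith

/-- Case 3 with jobs of exact top type present. -/
lemma charge_zd_case3a (hcase : ¬ g (zdia m g r s X) ≤ SH m g r s X (zdia m g r s X))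
    (hcc : ¬ r (zdia m g r s X) < cC m g r s X) (hne : (HhF m g r s X).Nonempty) :
    ∑ J ∈ H m g r s (zdia m g r s X) X, charge m g r s X J = r (zdia m g r s X) := by
  obtain ⟨hzd1, hzd2⟩ := zdia_Icc h hJ hs
  have hrho := h.rhopos hzd1 hzd2
  have hHhpos : 0 < Ssum s (HhF m g r s X) :=
    Ssum_pos (fun J hJX => (hs J hJX).1) (Finset.filter_subset _ _) hne
  have hden : Ssum s (HhF m g r s X) * (r (zdia m g r s X) / g (zdia m g r s X)) ≠ 0 :=
    ne_of_gt (mul_pos hHhpos hrho)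
  rw [sum_child_partition h hzd1 hzd2 (charge m g r s X)]
  have hHh : ∑ J ∈ X.filter (fun J' => mty m g s J' = zdia m g r s X),
      charge m g r s X J
      = Ssum s (HhF m g r s X) * (r (zdia m g r s X) / g (zdia m g r s X))
        + (r (zdia m g r s X) - cC m g r s X) := by
    have hterm : ∀ J ∈ X.filter (fun J' => mty m g s J' = zdia m g r s X),
        charge m g r s X J
        = s J * (r (zdia m g r s X) / g (zdia m g r s X)) *
            (1 + (r (zdia m g r s X) - cC m g r s X) /
              (Ssum s (HhF m g r s X) * (r (zdia m g r s X) / g (zdia m g r s X)))) := by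
      intro J hJm
      rw [Finset.mem_filter] at hJm
      have hA : mty m g s J ∈ A m g r (zdia m g r s X) := by
        rw [hJm.2]; exact ⟨hzd1, hzd2, P_refl _⟩
      rw [charge_eq, if_pos hA, if_neg hcase, if_neg hcc, if_pos hJm.2]
    rw [Finset.sum_congr rfl hterm]
    have e1 : ∀ J : ι, s J * (r (zdia m g r s X) / g (zdia m g r s X)) *
        (1 + (r (zdia m g r s X) - cC m g r s X) /
          (Ssum s (HhF m g r s X) * (r (zdia m g r s X) / g (zdia m g r s X))))
        = s J * ((r (zdia m g r s X) / g (zdia m g r s X)) *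
          (1 + (r (zdia m g r s X) - cC m g r s X) /
            (Ssum s (HhF m g r s X) * (r (zdia m g r s X) / g (zdia m g r s X))))) := by
      intro J; ring
    rw [Finset.sum_congr rfl (fun J _ => e1 J), ← Finset.sum_mul]
    have : (∑ J ∈ X.filter (fun J' => mty m g s J' = zdia m g r s X), s J)
        = Ssum s (HhF m g r s X) := rfl
    rw [this]
    have hx2 : Ssum s (HhF m g r s X) * (r (zdia m g r s X) / g (zdia m g r s X)) *
        ((r (zdia m g r s X) - cC m g r s X) /
          (Ssum s (HhF m g r s X) * (r (zdia m g r s X) / g (zdia m g r s X))))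
        = r (zdia m g r s X) - cC m g r s X := by
      rw [← mul_div_assoc]
      exact mul_div_cancel_left₀ _ hden
    calc Ssum s (HhF m g r s X) * (r (zdia m g r s X) / g (zdia m g r s X) *
          (1 + (r (zdia m g r s X) - cC m g r s X) /
            (Ssum s (HhF m g r s X) * (r (zdia m g r s X) / g (zdia m g r s X)))))
        = Ssum s (HhF m g r s X) * (r (zdia m g r s X) / g (zdia m g r s X))
          + Ssum s (HhF m g r s X) * (r (zdia m g r s X) / g (zdia m g r s X)) *
            ((r (zdia m g r s X) - cC m g r s X) /
              (Ssum s (HhF m g r s X) * (r (zdia m g r s X) / g (zdia m g r s X)))) := by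
          ring
      _ = Ssum s (HhF m g r s X) * (r (zdia m g r s X) / g (zdia m g r s X))
          + (r (zdia m g r s X) - cC m g r s X) := by rw [hx2]
  have hchild : ∀ i ∈ fchFin m g r (zdia m g r s X),
      ∑ J ∈ H m g r s i X, charge m g r s X J = SH m g r s X i * (r i / g i) := by
    intro i hiF
    rw [fchFin, Finset.mem_filter, Finset.mem_Icc] at hiF
    have hterm : ∀ J ∈ H m g r s i X, charge m g r s X J = s J * (r i / g i) := by
      intro J hJm
      obtain ⟨hJX, hJA⟩ := mem_H.mp hJm
      have hdi : pdef m g r i := pdef_of_p_pos (by omega)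
      have hA : mty m g s J ∈ A m g r (zdia m g r s X) :=
        ⟨hJA.1, hJA.2.1, P_trans hJA.2.2 (hiF.2 ▸ p_mem_P hdi)⟩
      have hne2 : mty m g s J ≠ zdia m g r s X := by
        intro hc
        exact zd_not_mem_child hzd1 hiF.2 (hc ▸ hJA)
      rw [charge_eq, if_pos hA, if_neg hcase, if_neg hcc, if_neg hne2,
        chil_eq hzd1 hiF.2 hJA]
    rw [Finset.sum_congr rfl hterm, SH, Ssum, Finset.sum_mul]
  rw [hHh, Finset.sum_congr rfl hchild]
  have : Ssum s (HhF m g r s X) * (r (zdia m g r s X) / g (zdia m g r s X))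
      + ∑ i ∈ fchFin m g r (zdia m g r s X), SH m g r s X i * (r i / g i)
      = cC m g r s X := by rw [cC]
  linarith

/-- Case 3 with no jobs of exact top type. -/
lemma charge_zd_case3b (hcase : ¬ g (zdia m g r s X) ≤ SH m g r s X (zdia m g r s X))
    (hcc : ¬ r (zdia m g r s X) < cC m g r s X) (hemp : HhF m g r s X = ∅) :
    ∑ J ∈ H m g r s (zdia m g r s X) X, charge m g r s X J = cC m g r s X := by
  obtain ⟨hzd1, hzd2⟩ := zdia_Icc h hJ hs
  rw [sum_child_partition h hzd1 hzd2 (charge m g r s X)]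
  have hHh : ∑ J ∈ X.filter (fun J' => mty m g s J' = zdia m g r s X),
      charge m g r s X J = 0 := by
    have : X.filter (fun J' => mty m g s J' = zdia m g r s X) = (∅ : Finset ι) := hemp
    rw [this, Finset.sum_empty]
  have hchild : ∀ i ∈ fchFin m g r (zdia m g r s X),
      ∑ J ∈ H m g r s i X, charge m g r s X J = SH m g r s X i * (r i / g i) := by
    intro i hiF
    rw [fchFin, Finset.mem_filter, Finset.mem_Icc] at hiF
    have hterm : ∀ J ∈ H m g r s i X, charge m g r s X J = s J * (r i / g i) := by
      intro J hJm
      obtain ⟨hJX, hJA⟩ := mem_H.mp hJm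
      have hdi : pdef m g r i := pdef_of_p_pos (by omega)
      have hA : mty m g s J ∈ A m g r (zdia m g r s X) :=
        ⟨hJA.1, hJA.2.1, P_trans hJA.2.2 (hiF.2 ▸ p_mem_P hdi)⟩
      have hne2 : mty m g s J ≠ zdia m g r s X := by
        intro hc
        exact zd_not_mem_child hzd1 hiF.2 (hc ▸ hJA)
      rw [charge_eq, if_pos hA, if_neg hcase, if_neg hcc, if_neg hne2,
        chil_eq hzd1 hiF.2 hJA]
    rw [Finset.sum_congr rfl hterm, SH, Ssum, Finset.sum_mul]
  rw [hHh, Finset.sum_congr rfl hchild, zero_add, cC]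
  have : Ssum s (HhF m g r s X) = 0 := by rw [hemp]; rfl
  rw [this, zero_mul, zero_add]

/-- Decomposition of the total charge. -/
lemma R_eq :
    ∑ J ∈ X, charge m g r s X J
      = (∑ z ∈ (TIcc m g r (zdia m g r s X)).erase (zdia m g r s X),
          SH m g r s X z * (r z / g z))
        + ∑ J ∈ H m g r s (zdia m g r s X) X, charge m g r s X J := by
  obtain ⟨hzd1, hzd2⟩ := zdia_Icc h hJ hs
  rw [sum_partition h hzd1 hzd2 (mty_cov h hJ hs) (charge m g r s X)]
  rw [← Finset.add_sum_erase _ _ (self_mem_TIcc hzd1 hzd2)]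
  rw [Finset.sum_congr rfl (fun i hi => charge_off h hJ hs hi)]
  ring

end Charge

section Hard

variable {ι : Type*} {m : ℕ} {g r : ℕ → ℝ} {s : ι → ℝ} {X : Finset ι}
variable (h : OK m g r) (hJ : X.Nonempty) (hs : ∀ J ∈ X, 0 < s J ∧ s J ≤ g m)
include h hJ hs

/-- Non-decency of the predecessor gives the key bound in the hard case. -/
lemma hard_case (hemp : HhF m g r s X = ∅) :
    r (zdia m g r s X) ≤ 8 / 7 * (cC m g r s X
      + ∑ z ∈ (TIcc m g r (zdia m g r s X)).erase (zdia m g r s X),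
          SH m g r s X z * (r z / g z)) := by
  obtain ⟨hzd1, hzd2⟩ := zdia_Icc h hJ hs
  obtain ⟨hk01, hk02⟩ := k0_Icc h hJ hs
  have hs' : ∀ J ∈ X, 0 < s J := fun J hJX => (hs J hJX).1
  obtain ⟨J0, hJ0X, hJ0⟩ := exists_k0 (m := m) (g := g) (s := s) hJ
  -- zdia is not k0
  have hzdk0 : zdia m g r s X ≠ k0f m g s X := by
    intro hc
    have : J0 ∈ HhF m g r s X := by
      rw [HhF, Finset.mem_filter]
      exact ⟨hJ0X, by rw [hJ0, hc]⟩
    rw [hemp] at this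
    exact absurd this (Finset.notMem_empty J0)
  -- the predecessor z' of zdia on the path from k0
  obtain ⟨z', hz'P, hdz', hpz'⟩ := P_pred (zdia_spec h hJ hs).1 hzdk0
  have hz'Icc := P_Icc hk01 hk02 hz'P
  have hz'lt : z' < zdia m g r s X := hpz' ▸ lt_p hdz'
  -- z' is not decent
  have hnd : ¬ decent m g r s X z' := by
    intro hdec
    have := zdia_min hz'P hdec
    omega
  rw [decent] at hnd
  push_neg at hnd
  obtain ⟨zt, hztP, hztne, hgt⟩ := hnd
  -- r zd ≤ r zt
  have hztPzd : zt ∈ P m g r (zdia m g r s X) := by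
    rcases P_cases hztP with h1 | ⟨_, h1⟩
    · exact absurd h1 hztne
    · exact hpz' ▸ h1
  have hztIcc := P_Icc hzd1 hzd2 hztPzd
  have hrzdzt : r (zdia m g r s X) ≤ r zt :=
    h.rmono hzd1 (P_ge hztPzd) hztIcc.2
  -- bound the violated sum by the full T(z') sum
  have hnonneg : ∀ z ∈ TIcc m g r z', 0 ≤ cn m g r s X z' z * r z := by
    intro z hz
    have hzIcc := T_Icc hz'Icc.1 hz'Icc.2 ((mem_TIcc hz'Icc.1 hz'Icc.2).mp hz)
    exact mul_nonneg (cn_nonneg h hs' hzIcc.1 hzIcc.2)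
      (le_of_lt (h.rpos hzIcc.1 hzIcc.2))
  have hsum1 : ∑ z ∈ (TIcc m g r z').filter (fun z => z ∈ A m g r zt),
      cn m g r s X z' z * r z ≤ ∑ z ∈ TIcc m g r z', cn m g r s X z' z * r z :=
    Finset.sum_le_sum_of_subset_of_nonneg (Finset.filter_subset _ _)
      (fun z hz _ => hnonneg z hz)
  have hsplit : ∑ z ∈ TIcc m g r z', cn m g r s X z' z * r z
      = cn m g r s X z' z' * r z'
        + ∑ z ∈ (TIcc m g r z').erase z', cn m g r s X z' z * r z :=
    (Finset.add_sum_erase _ _ (self_mem_TIcc hz'Icc.1 hz'Icc.2)).symm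
  -- top term of T(z')
  have hgz' := h.gpos hz'Icc.1 hz'Icc.2
  have hrz' := h.rpos hz'Icc.1 hz'Icc.2
  have htop : cn m g r s X z' z' * r z'
      ≤ SH m g r s X z' * (r z' / g z') + r z' := by
    rw [cn_self]
    have hceil : (⌈SH m g r s X z' / g z'⌉₊ : ℝ) < SH m g r s X z' / g z' + 1 :=
      Nat.ceil_lt_add_one (div_nonneg (SH_nonneg hs' z') (le_of_lt hgz'))
    have : (⌈SH m g r s X z' / g z'⌉₊ : ℝ) * r z'
        ≤ (SH m g r s X z' / g z' + 1) * r z' :=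
      mul_le_mul_of_nonneg_right (le_of_lt hceil) (le_of_lt hrz')
    calc (⌈SH m g r s X z' / g z'⌉₊ : ℝ) * r z'
        ≤ (SH m g r s X z' / g z' + 1) * r z' := this
      _ = SH m g r s X z' * (r z' / g z') + r z' := by ring
  -- lower terms of T(z')
  have hlow : ∑ z ∈ (TIcc m g r z').erase z', cn m g r s X z' z * r z
      ≤ ∑ z ∈ (TIcc m g r z').erase z', SH m g r s X z * (r z / g z) := by
    apply Finset.sum_le_sum
    intro z hz
    exact cn_mul_le h hs' hz'Icc.1 hz'Icc.2 (Finset.mem_of_mem_erase hz)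
      (Finset.ne_of_mem_erase hz)
  -- split the erased T(z') set into children of zdia and T(zdia)-nodes
  have hSHrho_nonneg : ∀ z, z ∈ Finset.Icc 1 m → 0 ≤ SH m g r s X z * (r z / g z) := by
    intro z hz
    rw [Finset.mem_Icc] at hz
    exact mul_nonneg (SH_nonneg hs' z) (le_of_lt (h.rhopos hz.1 hz.2))
  set Y : Finset ℕ := (Finset.Icc 1 m).filter (fun z => z ∈ y m g r z') with hY
  have hsubset : (TIcc m g r z').erase z'
      ⊆ Y ∪ (TIcc m g r (zdia m g r s X)).erase (zdia m g r s X) := by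
    intro z hz
    have hzT := (mem_TIcc hz'Icc.1 hz'Icc.2).mp (Finset.mem_of_mem_erase hz)
    have hzne := Finset.ne_of_mem_erase hz
    have hzIcc := T_Icc hz'Icc.1 hz'Icc.2 hzT
    rcases mem_T.mp hzT with h1 | ⟨a, haP, hzy⟩
    · exact absurd h1 hzne
    rw [Finset.mem_union]
    rcases P_cases haP with h1 | ⟨hdz'2, h1⟩
    · left
      rw [hY, Finset.mem_filter, Finset.mem_Icc]
      exact ⟨⟨hzIcc.1, hzIcc.2⟩, h1 ▸ hzy⟩
    · right
      rw [hpz'] at h1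
      have hzTzd : z ∈ T m g r (zdia m g r s X) := mem_T.mpr (Or.inr ⟨a, h1, hzy⟩)
      have hzned : z ≠ zdia m g r s X := by
        intro hc
        subst hc
        obtain ⟨_, _, hlt2, hpe⟩ := hzy
        rcases P_cases h1 with h2 | ⟨hdzd, h2⟩
        · omega
        · have h3 := P_ge h2
          have h4 := lt_p hdzd
          have hda : pdef m g r a := by
            apply pdef_of_p_pos
            first
            | (rw [← hpe]; omega)
            | (rw [hpe]; omega)
          have h5 := lt_p hda
          first
          | (rw [← hpe] at h5; omega)
          | (rw [hpe] at h5; omega)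
      rw [Finset.mem_erase]
      exact ⟨hzned, (mem_TIcc hzd1 hzd2).mpr hzTzd⟩
  have hsum2 : ∑ z ∈ (TIcc m g r z').erase z', SH m g r s X z * (r z / g z)
      ≤ (∑ z ∈ Y, SH m g r s X z * (r z / g z))
        + ∑ z ∈ (TIcc m g r (zdia m g r s X)).erase (zdia m g r s X),
            SH m g r s X z * (r z / g z) := by
    have hstep1 : ∑ z ∈ (TIcc m g r z').erase z', SH m g r s X z * (r z / g z)
        ≤ ∑ z ∈ Y ∪ (TIcc m g r (zdia m g r s X)).erase (zdia m g r s X),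
            SH m g r s X z * (r z / g z) := by
      apply Finset.sum_le_sum_of_subset_of_nonneg hsubset
      intro z hzU _
      rw [Finset.mem_union] at hzU
      apply hSHrho_nonneg
      rcases hzU with hz1 | hz1
      · exact Finset.mem_of_mem_filter z hz1
      · have := T_Icc hzd1 hzd2 ((mem_TIcc hzd1 hzd2).mp (Finset.mem_of_mem_erase hz1))
        rw [Finset.mem_Icc]; exact this
    have hstep2 : ∑ z ∈ Y ∪ (TIcc m g r (zdia m g r s X)).erase (zdia m g r s X),
          SH m g r s X z * (r z / g z)
        ≤ (∑ z ∈ Y, SH m g r s X z * (r z / g z))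
          + ∑ z ∈ (TIcc m g r (zdia m g r s X)).erase (zdia m g r s X),
              SH m g r s X z * (r z / g z) := by
      have := Finset.sum_union_inter (s₁ := Y)
        (s₂ := (TIcc m g r (zdia m g r s X)).erase (zdia m g r s X))
        (f := fun z => SH m g r s X z * (r z / g z))
      have hint : 0 ≤ ∑ z ∈ Y ∩ (TIcc m g r (zdia m g r s X)).erase (zdia m g r s X),
          SH m g r s X z * (r z / g z) := by
        apply Finset.sum_nonneg
        intro z hz
        exact hSHrho_nonneg z (Finset.mem_of_mem_filter z
          (Finset.mem_of_mem_inter_left hz))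
      linarith
    linarith
  -- children sum bounded by c
  have hYc : SH m g r s X z' * (r z' / g z')
      + ∑ z ∈ Y, SH m g r s X z * (r z / g z) ≤ cC m g r s X := by
    have hz'notY : z' ∉ Y := by
      rw [hY, Finset.mem_filter]
      rintro ⟨_, _, _, hlt2, _⟩
      omega
    have hins : insert z' Y ⊆ fchFin m g r (zdia m g r s X) := by
      intro z hz
      rw [Finset.mem_insert] at hz
      rw [fchFin, Finset.mem_filter, Finset.mem_Icc]
      rcases hz with rfl | hz
      · exact ⟨⟨hz'Icc.1, hz'Icc.2⟩, hpz'⟩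
      · rw [hY, Finset.mem_filter, Finset.mem_Icc] at hz
        obtain ⟨hb, _, _, _, hpe⟩ := hz
        exact ⟨hb, hpe.trans hpz'⟩
    have hsum3 : ∑ z ∈ insert z' Y, SH m g r s X z * (r z / g z)
        ≤ ∑ z ∈ fchFin m g r (zdia m g r s X), SH m g r s X z * (r z / g z) := by
      apply Finset.sum_le_sum_of_subset_of_nonneg hins
      intro z hz _
      rw [fchFin, Finset.mem_filter] at hz
      exact hSHrho_nonneg z hz.1
    rw [Finset.sum_insert hz'notY] at hsum3
    have hHh0 : 0 ≤ Ssum s (HhF m g r s X) *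
        (r (zdia m g r s X) / g (zdia m g r s X)) :=
      mul_nonneg (Ssum_nonneg hs' (Finset.filter_subset _ _))
        (le_of_lt (h.rhopos hzd1 hzd2))
    rw [cC]
    linarith
  -- powers of 8
  have hrlt : r z' < r (zdia m g r s X) := h.hr z' _ hz'Icc.1 hz'lt hzd2
  have hr8 : 8 * r z' ≤ r (zdia m g r s X) :=
    h.r8 hz'Icc.1 hz'Icc.2 hzd1 hzd2 hrlt
  -- put everything together
  linarith

end Hard


/-- For a nonempty finite set `𝒥` of jobs with sizes in
`(0, g m]`:
`(1/2)·∑_{J ∈ 𝒥} r̃(𝒥)(J) ≤ ∑_{z ∈ T(z⋄)} cn_{z⋄}(z)·r z ≤ (15/7)·∑_{J ∈ 𝒥} r̃(𝒥)(J)`. -/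
theorem statement_13 {ι : Type*} (m : ℕ) (g r : ℕ → ℝ) (s : ι → ℝ) (𝒥 : Finset ι)
    (hm : 1 ≤ m)
    (hg1 : 0 < g 1) (hr1 : 0 < r 1)
    (hg : ∀ i j, 1 ≤ i → i < j → j ≤ m → g i < g j)
    (hr : ∀ i j, 1 ≤ i → i < j → j ≤ m → r i < r j)
    (hr8 : ∀ z, 1 ≤ z → z ≤ m → ∃ n : ℤ, r z = (8 : ℝ) ^ n)
    (hJ : 𝒥.Nonempty)
    (hs : ∀ J ∈ 𝒥, 0 < s J ∧ s J ≤ g m) :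
    1 / 2 * (∑ J ∈ 𝒥, charge m g r s 𝒥 J)
      ≤ (∑ z ∈ TIcc m g r (zdia m g r s 𝒥),
          cn m g r s 𝒥 (zdia m g r s 𝒥) z * r z) ∧
    (∑ z ∈ TIcc m g r (zdia m g r s 𝒥),
        cn m g r s 𝒥 (zdia m g r s 𝒥) z * r z)
      ≤ 15 / 7 * (∑ J ∈ 𝒥, charge m g r s 𝒥 J) := by
  classical
  have hOK : OK m g r := ⟨hm, hg1, hr1, hg, hr, hr8⟩
  have hs' : ∀ J ∈ 𝒥, 0 < s J := fun J hJX => (hs J hJX).1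
  obtain ⟨hzd1, hzd2⟩ := zdia_Icc hOK hJ hs
  obtain ⟨hk01, hk02⟩ := k0_Icc hOK hJ hs
  have hgzd := hOK.gpos hzd1 hzd2
  have hrzd := hOK.rpos hzd1 hzd2
  have hrho := hOK.rhopos hzd1 hzd2
  -- positive top load
  obtain ⟨J0, hJ0X, hJ0⟩ := exists_k0 (m := m) (g := g) (s := s) hJ
  have hJ0H : J0 ∈ H m g r s (zdia m g r s 𝒥) 𝒥 :=
    mem_H.mpr ⟨hJ0X, by rw [hJ0]; exact ⟨hk01, hk02, (zdia_spec hOK hJ hs).1⟩⟩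
  have hSHpos : 0 < SH m g r s 𝒥 (zdia m g r s 𝒥) :=
    Ssum_pos hs' H_subset ⟨J0, hJ0H⟩
  have hn1 : 1 ≤ ⌈SH m g r s 𝒥 (zdia m g r s 𝒥) / g (zdia m g r s 𝒥)⌉₊ := by
    have h0 : (0 : ℕ) < ⌈SH m g r s 𝒥 (zdia m g r s 𝒥) / g (zdia m g r s 𝒥)⌉₊ :=
      Nat.lt_ceil.mpr (by push_cast; exact div_pos hSHpos hgzd)
    omega
  have hn1' : (1 : ℝ) ≤ (⌈SH m g r s 𝒥 (zdia m g r s 𝒥) / g (zdia m g r s 𝒥)⌉₊ : ℝ) := by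
    exact_mod_cast hn1
  -- configuration cost decomposition
  have hC : ∑ z ∈ TIcc m g r (zdia m g r s 𝒥), cn m g r s 𝒥 (zdia m g r s 𝒥) z * r z
      = (⌈SH m g r s 𝒥 (zdia m g r s 𝒥) / g (zdia m g r s 𝒥)⌉₊ : ℝ) * r (zdia m g r s 𝒥)
        + ∑ z ∈ (TIcc m g r (zdia m g r s 𝒥)).erase (zdia m g r s 𝒥),
            cn m g r s 𝒥 (zdia m g r s 𝒥) z * r z := by
    rw [← Finset.add_sum_erase _ _ (self_mem_TIcc hzd1 hzd2), cn_self]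
  -- total charge decomposition
  have hR := R_eq hOK hJ hs
  -- sign facts
  have hSig0 : 0 ≤ ∑ z ∈ (TIcc m g r (zdia m g r s 𝒥)).erase (zdia m g r s 𝒥),
      SH m g r s 𝒥 z * (r z / g z) := by
    apply Finset.sum_nonneg
    intro z hz
    have := T_Icc hzd1 hzd2 ((mem_TIcc hzd1 hzd2).mp (Finset.mem_of_mem_erase hz))
    exact mul_nonneg (SH_nonneg hs' z) (le_of_lt (hOK.rhopos this.1 this.2))
  have hSigc0 : 0 ≤ ∑ z ∈ (TIcc m g r (zdia m g r s 𝒥)).erase (zdia m g r s 𝒥),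
      cn m g r s 𝒥 (zdia m g r s 𝒥) z * r z := by
    apply Finset.sum_nonneg
    intro z hz
    have := T_Icc hzd1 hzd2 ((mem_TIcc hzd1 hzd2).mp (Finset.mem_of_mem_erase hz))
    exact mul_nonneg (cn_nonneg hOK hs' this.1 this.2) (le_of_lt (hOK.rpos this.1 this.2))
  have hSigcle : ∑ z ∈ (TIcc m g r (zdia m g r s 𝒥)).erase (zdia m g r s 𝒥),
      cn m g r s 𝒥 (zdia m g r s 𝒥) z * r z
      ≤ ∑ z ∈ (TIcc m g r (zdia m g r s 𝒥)).erase (zdia m g r s 𝒥),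
          SH m g r s 𝒥 z * (r z / g z) := by
    apply Finset.sum_le_sum
    intro z hz
    exact cn_mul_le hOK hs' hzd1 hzd2 (Finset.mem_of_mem_erase hz)
      (Finset.ne_of_mem_erase hz)
  -- capacity-cost identity
  have hBq' : (r (zdia m g r s 𝒥) / g (zdia m g r s 𝒥)) * Bq m g r s 𝒥 (zdia m g r s 𝒥)
      = (⌈SH m g r s 𝒥 (zdia m g r s 𝒥) / g (zdia m g r s 𝒥)⌉₊ : ℝ)
        * r (zdia m g r s 𝒥) := by
    rw [Bq]
    field_simp
  -- deficit bound (lower-bound workhorse)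
  have hdef : (∑ z ∈ (TIcc m g r (zdia m g r s 𝒥)).erase (zdia m g r s 𝒥),
        SH m g r s 𝒥 z * (r z / g z))
      - 2 * ∑ z ∈ (TIcc m g r (zdia m g r s 𝒥)).erase (zdia m g r s 𝒥),
          cn m g r s 𝒥 (zdia m g r s 𝒥) z * r z
      ≤ (⌈SH m g r s 𝒥 (zdia m g r s 𝒥) / g (zdia m g r s 𝒥)⌉₊ : ℝ)
          * r (zdia m g r s 𝒥) := by
    have h1 := deficit_total hOK hs' hzd1 hzd2
    have h2 : ∑ z ∈ (TIcc m g r (zdia m g r s 𝒥)).erase (zdia m g r s 𝒥),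
        (SH m g r s 𝒥 z * (r z / g z) - 2 * (cn m g r s 𝒥 (zdia m g r s 𝒥) z * r z))
        = (∑ z ∈ (TIcc m g r (zdia m g r s 𝒥)).erase (zdia m g r s 𝒥),
            SH m g r s 𝒥 z * (r z / g z))
          - 2 * ∑ z ∈ (TIcc m g r (zdia m g r s 𝒥)).erase (zdia m g r s 𝒥),
              cn m g r s 𝒥 (zdia m g r s 𝒥) z * r z := by
      rw [Finset.sum_sub_distrib, Finset.mul_sum]
    rw [h2, hBq'] at h1
    exact h1
  -- case analysis on the top node
  have hcases : (∑ J ∈ H m g r s (zdia m g r s 𝒥) 𝒥, charge m g r s 𝒥 J)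
        ≤ (⌈SH m g r s 𝒥 (zdia m g r s 𝒥) / g (zdia m g r s 𝒥)⌉₊ : ℝ)
          * r (zdia m g r s 𝒥)
      ∧ (⌈SH m g r s 𝒥 (zdia m g r s 𝒥) / g (zdia m g r s 𝒥)⌉₊ : ℝ)
          * r (zdia m g r s 𝒥)
        ≤ 15 / 7 * (∑ J ∈ H m g r s (zdia m g r s 𝒥) 𝒥, charge m g r s 𝒥 J)
          + 8 / 7 * ∑ z ∈ (TIcc m g r (zdia m g r s 𝒥)).erase (zdia m g r s 𝒥),
              SH m g r s 𝒥 z * (r z / g z) := by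
    by_cases hcase : g (zdia m g r s 𝒥) ≤ SH m g r s 𝒥 (zdia m g r s 𝒥)
    · have hRe := charge_zd_case1 hOK hJ hs hcase
      have hSHle : SH m g r s 𝒥 (zdia m g r s 𝒥)
          ≤ (⌈SH m g r s 𝒥 (zdia m g r s 𝒥) / g (zdia m g r s 𝒥)⌉₊ : ℝ)
            * g (zdia m g r s 𝒥) := by
        have hceil := Nat.le_ceil (SH m g r s 𝒥 (zdia m g r s 𝒥) / g (zdia m g r s 𝒥))
        calc SH m g r s 𝒥 (zdia m g r s 𝒥)
            = SH m g r s 𝒥 (zdia m g r s 𝒥) / g (zdia m g r s 𝒥) * g (zdia m g r s 𝒥) := by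
              field_simp
          _ ≤ _ := mul_le_mul_of_nonneg_right hceil (le_of_lt hgzd)
      have hup : (∑ J ∈ H m g r s (zdia m g r s 𝒥) 𝒥, charge m g r s 𝒥 J)
          ≤ (⌈SH m g r s 𝒥 (zdia m g r s 𝒥) / g (zdia m g r s 𝒥)⌉₊ : ℝ)
            * r (zdia m g r s 𝒥) := by
        rw [hRe]
        calc SH m g r s 𝒥 (zdia m g r s 𝒥) * (r (zdia m g r s 𝒥) / g (zdia m g r s 𝒥))
            ≤ ((⌈SH m g r s 𝒥 (zdia m g r s 𝒥) / g (zdia m g r s 𝒥)⌉₊ : ℝ)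
                * g (zdia m g r s 𝒥)) * (r (zdia m g r s 𝒥) / g (zdia m g r s 𝒥)) :=
              mul_le_mul_of_nonneg_right hSHle (le_of_lt hrho)
          _ = (⌈SH m g r s 𝒥 (zdia m g r s 𝒥) / g (zdia m g r s 𝒥)⌉₊ : ℝ)
                * r (zdia m g r s 𝒥) := by field_simp
      refine ⟨hup, ?_⟩
      -- n · r ≤ 2 · Rzd
      have hng : (⌈SH m g r s 𝒥 (zdia m g r s 𝒥) / g (zdia m g r s 𝒥)⌉₊ : ℝ)
          * g (zdia m g r s 𝒥) ≤ 2 * SH m g r s 𝒥 (zdia m g r s 𝒥) := by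
        rcases eq_or_lt_of_le hn1 with h1 | h1
        · have he : (⌈SH m g r s 𝒥 (zdia m g r s 𝒥) / g (zdia m g r s 𝒥)⌉₊ : ℝ) = 1 := by
            exact_mod_cast h1.symm
          rw [he]
          linarith
        · have hlt : ((⌈SH m g r s 𝒥 (zdia m g r s 𝒥) / g (zdia m g r s 𝒥)⌉₊ - 1 : ℕ) : ℝ)
              < SH m g r s 𝒥 (zdia m g r s 𝒥) / g (zdia m g r s 𝒥) :=
            Nat.lt_ceil.mp (by omega)
          have hcast : ((⌈SH m g r s 𝒥 (zdia m g r s 𝒥) / g (zdia m g r s 𝒥)⌉₊ - 1 : ℕ) : ℝ)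
              = (⌈SH m g r s 𝒥 (zdia m g r s 𝒥) / g (zdia m g r s 𝒥)⌉₊ : ℝ) - 1 := by
            have := hn1
            push_cast [Nat.cast_sub hn1]
            ring
          rw [hcast] at hlt
          have h3 : ((⌈SH m g r s 𝒥 (zdia m g r s 𝒥) / g (zdia m g r s 𝒥)⌉₊ : ℝ) - 1)
              * g (zdia m g r s 𝒥) < SH m g r s 𝒥 (zdia m g r s 𝒥) :=
            (lt_div_iff₀ hgzd).mp hlt
          have h4 : (2 : ℝ) ≤ (⌈SH m g r s 𝒥 (zdia m g r s 𝒥) / g (zdia m g r s 𝒥)⌉₊ : ℝ) := by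
            exact_mod_cast h1
          nlinarith [hgzd]
      have h2R : (⌈SH m g r s 𝒥 (zdia m g r s 𝒥) / g (zdia m g r s 𝒥)⌉₊ : ℝ)
          * r (zdia m g r s 𝒥)
          ≤ 2 * (∑ J ∈ H m g r s (zdia m g r s 𝒥) 𝒥, charge m g r s 𝒥 J) := by
        rw [hRe]
        calc (⌈SH m g r s 𝒥 (zdia m g r s 𝒥) / g (zdia m g r s 𝒥)⌉₊ : ℝ)
              * r (zdia m g r s 𝒥)
            = ((⌈SH m g r s 𝒥 (zdia m g r s 𝒥) / g (zdia m g r s 𝒥)⌉₊ : ℝ)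
                * g (zdia m g r s 𝒥)) * (r (zdia m g r s 𝒥) / g (zdia m g r s 𝒥)) := by
              field_simp
          _ ≤ (2 * SH m g r s 𝒥 (zdia m g r s 𝒥))
                * (r (zdia m g r s 𝒥) / g (zdia m g r s 𝒥)) :=
              mul_le_mul_of_nonneg_right hng (le_of_lt hrho)
          _ = 2 * (SH m g r s 𝒥 (zdia m g r s 𝒥)
                * (r (zdia m g r s 𝒥) / g (zdia m g r s 𝒥))) := by ring
      have hR0 : 0 ≤ ∑ J ∈ H m g r s (zdia m g r s 𝒥) 𝒥, charge m g r s 𝒥 J := by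
        rw [hRe]
        exact mul_nonneg (le_of_lt hSHpos) (le_of_lt hrho)
      linarith
    · -- SH < g ⇒ n = 1
      have hnr : (⌈SH m g r s 𝒥 (zdia m g r s 𝒥) / g (zdia m g r s 𝒥)⌉₊ : ℝ) = 1 := by
        have hle : ⌈SH m g r s 𝒥 (zdia m g r s 𝒥) / g (zdia m g r s 𝒥)⌉₊ ≤ 1 :=
          Nat.ceil_le.mpr (by
            rw [Nat.cast_one]
            exact le_of_lt ((div_lt_one hgzd).mpr (not_le.mp hcase)))
        have : ⌈SH m g r s 𝒥 (zdia m g r s 𝒥) / g (zdia m g r s 𝒥)⌉₊ = 1 := by omega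
        exact_mod_cast this
      rw [hnr, one_mul]
      by_cases hcc : r (zdia m g r s 𝒥) < cC m g r s 𝒥
      · have hRe := charge_zd_case2 hOK hJ hs hcase hcc
        rw [hRe]
        constructor
        · linarith
        · linarith
      · rcases Finset.eq_empty_or_nonempty (HhF m g r s 𝒥) with hemp | hne2
        · have hRe := charge_zd_case3b hOK hJ hs hcase hcc hemp
          have hhard := hard_case hOK hJ hs hemp
          have hcC0 : 0 ≤ cC m g r s 𝒥 := by
            rw [cC]
            have h1 : 0 ≤ Ssum s (HhF m g r s 𝒥)
                * (r (zdia m g r s 𝒥) / g (zdia m g r s 𝒥)) :=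
              mul_nonneg (Ssum_nonneg hs' (Finset.filter_subset _ _)) (le_of_lt hrho)
            have h2 : 0 ≤ ∑ i ∈ fchFin m g r (zdia m g r s 𝒥),
                SH m g r s 𝒥 i * (r i / g i) := by
              apply Finset.sum_nonneg
              intro i hi
              rw [fchFin, Finset.mem_filter, Finset.mem_Icc] at hi
              exact mul_nonneg (SH_nonneg hs' i) (le_of_lt (hOK.rhopos hi.1.1 hi.1.2))
            linarith
          rw [hRe]
          constructor
          · exact not_lt.mp hcc
          · linarith
        · have hRe := charge_zd_case3a hOK hJ hs hcase hcc hne2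
          rw [hRe]
          constructor
          · linarith
          · linarith
  obtain ⟨hle1, hle2⟩ := hcases
  constructor
  · rw [hR, hC]
    linarith
  · rw [hR, hC]
    linarith


end BSHM
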